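/- arXiv:1401.4563 — 3 statements merged into one kernel-verified Lean document; each statement's English description precedes it below -/
import Mathlib

section
/- Let Ω be a nonempty open subset of ℝ^d and equip L²_loc(Ω) with the topology of L²-convergence on compact subsets. (1) For every g ∈ L²_cpt(Ω), the map Λ_g(f) = ∫_Ω f·g dλ is a well-defined continuous linear functional on L²_loc(Ω). (2) Conversely, for every continuous linear functional Λ on L²_loc(Ω) there exists g ∈ L²_cpt(Ω), unique up to equality almost everywhere, such that Λ(f) = ∫_Ω f·g dλ for all f ∈ L²_loc(Ω). In particular, the pairing (f,g) ↦ ∫_Ω f·g dλ identifies L²_cpt(Ω) with the topological dual of L²_loc(Ω). -/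
open MeasureTheory

noncomputable section

/-- `L²_loc(Ω)` for an open set `Ω ⊆ ℝ^d`: the space of equivalence classes (modulo equality
almost everywhere) of functions `f : ℝ^d → ℂ` (with respect to Lebesgue measure restricted
to `Ω`) which are square integrable on every compact subset `K ⊆ Ω`. -/
def L2loc (d : ℕ) (Ω : Set (Fin d → ℝ)) :
    Submodule ℂ ((Fin d → ℝ) →ₘ[volume.restrict Ω] ℂ) where
  carrier := {f | ∀ K : Set (Fin d → ℝ), IsCompact K → K ⊆ Ω →
    eLpNorm f 2 ((volume.restrict Ω).restrict K) < ⊤}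
  add_mem' := by
    intro a b ha hb K hK hKΩ
    have h1 : ⇑(a + b) =ᵐ[((volume.restrict Ω)).restrict K] ⇑a + ⇑b :=
      (AEEqFun.coeFn_add a b).restrict
    rw [eLpNorm_congr_ae h1]
    exact (eLpNorm_add_le a.aestronglyMeasurable.restrict b.aestronglyMeasurable.restrict
      one_le_two).trans_lt (ENNReal.add_lt_top.mpr ⟨ha K hK hKΩ, hb K hK hKΩ⟩)
  zero_mem' := by
    intro K hK hKΩ
    have h1 : ⇑(0 : (Fin d → ℝ) →ₘ[volume.restrict Ω] ℂ)
        =ᵐ[((volume.restrict Ω)).restrict K] 0 := (AEEqFun.coeFn_zero).restrict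
    rw [eLpNorm_congr_ae h1, eLpNorm_zero]
    exact ENNReal.zero_lt_top
  smul_mem' := by
    intro c a ha K hK hKΩ
    have h1 : ⇑(c • a) =ᵐ[((volume.restrict Ω)).restrict K] c • ⇑a :=
      (AEEqFun.coeFn_smul c a).restrict
    rw [eLpNorm_congr_ae h1, eLpNorm_const_smul]
    exact ENNReal.mul_lt_top (by simp) (ha K hK hKΩ)

/-- The seminorm `p_K(f) = (∫_K |f|² dλ)^(1/2)` on `L²_loc(Ω)`, for a compact `K ⊆ Ω`. -/
def L2locSeminorm (d : ℕ) (Ω : Set (Fin d → ℝ)) (K : Set (Fin d → ℝ))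
    (hK : IsCompact K) (hKΩ : K ⊆ Ω) : Seminorm ℂ (L2loc d Ω) where
  toFun f := (eLpNorm (f : (Fin d → ℝ) →ₘ[volume.restrict Ω] ℂ) 2
      ((volume.restrict Ω).restrict K)).toReal
  map_zero' := by
    have h1 : ⇑(((0 : L2loc d Ω) : (Fin d → ℝ) →ₘ[volume.restrict Ω] ℂ))
        =ᵐ[((volume.restrict Ω)).restrict K] 0 := by
      simpa using (AEEqFun.coeFn_zero (β := ℂ)).restrict
    show (eLpNorm (((0 : L2loc d Ω) : (Fin d → ℝ) →ₘ[volume.restrict Ω] ℂ)) 2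
      ((volume.restrict Ω).restrict K)).toReal = 0
    rw [eLpNorm_congr_ae h1, eLpNorm_zero, ENNReal.toReal_zero]
  add_le' := by
    intro a b
    have h1 : ⇑(((a + b : L2loc d Ω) : (Fin d → ℝ) →ₘ[volume.restrict Ω] ℂ))
        =ᵐ[((volume.restrict Ω)).restrict K] ⇑(a : (Fin d → ℝ) →ₘ[volume.restrict Ω] ℂ)
          + ⇑(b : (Fin d → ℝ) →ₘ[volume.restrict Ω] ℂ) := by
      simpa using (AEEqFun.coeFn_add (a : (Fin d → ℝ) →ₘ[volume.restrict Ω] ℂ) b).restrict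
    have h2 := eLpNorm_add_le
      ((a : (Fin d → ℝ) →ₘ[volume.restrict Ω] ℂ).aestronglyMeasurable.restrict (s := K))
      ((b : (Fin d → ℝ) →ₘ[volume.restrict Ω] ℂ).aestronglyMeasurable.restrict (s := K))
      one_le_two
    have hfa := a.2 K hK hKΩ
    have hfb := b.2 K hK hKΩ
    show (eLpNorm (↑(a + b) : (Fin d → ℝ) →ₘ[volume.restrict Ω] ℂ) 2
      ((volume.restrict Ω).restrict K)).toReal ≤ _ + _
    calc (eLpNorm (↑(a + b) : (Fin d → ℝ) →ₘ[volume.restrict Ω] ℂ) 2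
          ((volume.restrict Ω).restrict K)).toReal
        = (eLpNorm (⇑(a : (Fin d → ℝ) →ₘ[volume.restrict Ω] ℂ)
            + ⇑(b : (Fin d → ℝ) →ₘ[volume.restrict Ω] ℂ)) 2
            ((volume.restrict Ω).restrict K)).toReal := by rw [eLpNorm_congr_ae h1]
      _ ≤ (eLpNorm (a : (Fin d → ℝ) →ₘ[volume.restrict Ω] ℂ) 2 ((volume.restrict Ω).restrict K)
            + eLpNorm (b : (Fin d → ℝ) →ₘ[volume.restrict Ω] ℂ) 2
              ((volume.restrict Ω).restrict K)).toReal := by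
          exact ENNReal.toReal_mono (ENNReal.add_lt_top.mpr ⟨hfa, hfb⟩).ne h2
      _ = _ := ENNReal.toReal_add hfa.ne hfb.ne
  neg' := by
    intro a
    have h1 : ⇑(((-a : L2loc d Ω) : (Fin d → ℝ) →ₘ[volume.restrict Ω] ℂ))
        =ᵐ[((volume.restrict Ω)).restrict K]
          -⇑(a : (Fin d → ℝ) →ₘ[volume.restrict Ω] ℂ) := by
      simpa using (AEEqFun.coeFn_neg (a : (Fin d → ℝ) →ₘ[volume.restrict Ω] ℂ)).restrict
    show (eLpNorm (((-a : L2loc d Ω) : (Fin d → ℝ) →ₘ[volume.restrict Ω] ℂ)) 2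
        ((volume.restrict Ω).restrict K)).toReal
      = (eLpNorm ((a : (Fin d → ℝ) →ₘ[volume.restrict Ω] ℂ)) 2
        ((volume.restrict Ω).restrict K)).toReal
    rw [eLpNorm_congr_ae h1, eLpNorm_neg]
  smul' := by
    intro c a
    have h1 : ⇑(((c • a : L2loc d Ω) : (Fin d → ℝ) →ₘ[volume.restrict Ω] ℂ))
        =ᵐ[((volume.restrict Ω)).restrict K]
          c • ⇑(a : (Fin d → ℝ) →ₘ[volume.restrict Ω] ℂ) := by
      simpa using (AEEqFun.coeFn_smul c (a : (Fin d → ℝ) →ₘ[volume.restrict Ω] ℂ)).restrict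
    show (eLpNorm (((c • a : L2loc d Ω) : (Fin d → ℝ) →ₘ[volume.restrict Ω] ℂ)) 2
        ((volume.restrict Ω).restrict K)).toReal
      = ‖c‖ * (eLpNorm ((a : (Fin d → ℝ) →ₘ[volume.restrict Ω] ℂ)) 2
        ((volume.restrict Ω).restrict K)).toReal
    rw [eLpNorm_congr_ae h1, eLpNorm_const_smul, ENNReal.toReal_mul]
    simp

/-- The family of seminorms `p_j` associated with a family of compact subsets of `Ω`. -/
def L2locSeminormFamily (d : ℕ) (Ω : Set (Fin d → ℝ)) (K : ℕ → Set (Fin d → ℝ))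
    (hK : ∀ j, IsCompact (K j)) (hKΩ : ∀ j, K j ⊆ Ω) :
    SeminormFamily ℂ (L2loc d Ω) ℕ :=
  fun j => L2locSeminorm d Ω (K j) (hK j) (hKΩ j)

/-- The locally convex topology on `L²_loc(Ω)` generated by the seminorms
`p_j(f) = (∫_{K_j} |f|² dλ)^(1/2)`: the topology of `L²`-convergence on compact subsets. -/
def L2locTopology (d : ℕ) (Ω : Set (Fin d → ℝ)) (K : ℕ → Set (Fin d → ℝ))
    (hK : ∀ j, IsCompact (K j)) (hKΩ : ∀ j, K j ⊆ Ω) :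
    TopologicalSpace (L2loc d Ω) :=
  (L2locSeminormFamily d Ω K hK hKΩ).moduleFilterBasis.topology

/-- An element of `L²_loc(Ω)` has compact essential support if it vanishes almost everywhere
outside some compact subset of `Ω`; these elements form the space `L²_cpt(Ω)`. -/
def HasCompactEssSupport (d : ℕ) (Ω : Set (Fin d → ℝ)) (f : L2loc d Ω) : Prop :=
  ∃ C : Set (Fin d → ℝ), IsCompact C ∧ C ⊆ Ω ∧
    ∀ᵐ x ∂(volume.restrict Ω), x ∉ C →
      (f : (Fin d → ℝ) →ₘ[volume.restrict Ω] ℂ) x = 0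

end


noncomputable section AuxL2cpt

open MeasureTheory Set Filter
open scoped ENNReal ComplexConjugate ComplexInnerProductSpace

variable {d : ℕ} {Ω : Set (Fin d → ℝ)}

lemma memℒp_of_L2loc (f : L2loc d Ω) {S : Set (Fin d → ℝ)} (hS : IsCompact S) (hSΩ : S ⊆ Ω) :
    MemLp (⇑(f : (Fin d → ℝ) →ₘ[volume.restrict Ω] ℂ)) 2 ((volume.restrict Ω).restrict S) :=
  ⟨(f : (Fin d → ℝ) →ₘ[volume.restrict Ω] ℂ).aestronglyMeasurable.restrict, f.2 S hS hSΩ⟩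

lemma Kmono {K : ℕ → Set (Fin d → ℝ)} (hKint : ∀ j, K j ⊆ interior (K (j + 1))) :
    Monotone K :=
  monotone_nat_of_le_succ fun n => (hKint n).trans interior_subset

lemma exists_K_superset {K : ℕ → Set (Fin d → ℝ)}
    (hKint : ∀ j, K j ⊆ interior (K (j + 1))) (hKunion : (⋃ j, K j) = Ω)
    {C : Set (Fin d → ℝ)} (hC : IsCompact C) (hCΩ : C ⊆ Ω) : ∃ j, C ⊆ K j := by
  have hcover : C ⊆ ⋃ j, interior (K (j + 1)) := by
    intro x hx
    have hxΩ : x ∈ ⋃ j, K j := by rw [hKunion]; exact hCΩ hx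
    obtain ⟨j, hj⟩ := Set.mem_iUnion.mp hxΩ
    exact Set.mem_iUnion.mpr ⟨j, hKint j hj⟩
  obtain ⟨s, hs⟩ := hC.elim_finite_subcover _ (fun j => isOpen_interior) hcover
  refine ⟨s.sup id + 1, fun x hx => ?_⟩
  obtain ⟨j, hjs, hj⟩ := Set.mem_iUnion₂.mp (hs hx)
  exact Kmono hKint (Nat.succ_le_succ (Finset.le_sup (f := id) hjs)) (interior_subset hj)

lemma indicator_ae_congr {α : Type*} {m : MeasurableSpace α} {μ : Measure α} {S : Set α}
    (hSm : MeasurableSet S) {f g : α → ℂ} (h : f =ᵐ[μ.restrict S] g) :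
    S.indicator f =ᵐ[μ] S.indicator g := by
  filter_upwards [(ae_restrict_iff' hSm).mp h] with x hx
  by_cases hxS : x ∈ S
  · simpa [Set.indicator_of_mem hxS] using hx hxS
  · simp [Set.indicator_of_notMem hxS]

/-- Extension by zero of an `L²` function on a measurable set `S ⊆ Ω`, as an a.e.-equivalence
class on `Ω`. -/
def extFun (d : ℕ) (Ω : Set (Fin d → ℝ)) (S : Set (Fin d → ℝ)) (hSm : MeasurableSet S)
    (h : Lp ℂ 2 ((volume.restrict Ω).restrict S)) : (Fin d → ℝ) →ₘ[volume.restrict Ω] ℂ :=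
  AEEqFun.mk (S.indicator ⇑h) (((Lp.stronglyMeasurable h).indicator hSm).aestronglyMeasurable)

lemma extFun_coeFn (S : Set (Fin d → ℝ)) (hSm : MeasurableSet S)
    (h : Lp ℂ 2 ((volume.restrict Ω).restrict S)) :
    ⇑(extFun d Ω S hSm h) =ᵐ[volume.restrict Ω] S.indicator ⇑h :=
  AEEqFun.coeFn_mk _ _

lemma extFun_mem (S : Set (Fin d → ℝ)) (hSm : MeasurableSet S)
    (h : Lp ℂ 2 ((volume.restrict Ω).restrict S)) :
    extFun d Ω S hSm h ∈ L2loc d Ω := by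
  intro K hK hKΩ
  calc eLpNorm (extFun d Ω S hSm h) 2 (((volume.restrict Ω)).restrict K)
      = eLpNorm (S.indicator ⇑h) 2 ((volume.restrict Ω).restrict K) :=
        eLpNorm_congr_ae (extFun_coeFn S hSm h).restrict
    _ ≤ eLpNorm (S.indicator ⇑h) 2 (volume.restrict Ω) :=
        eLpNorm_mono_measure _ Measure.restrict_le_self
    _ = eLpNorm (⇑h) 2 ((volume.restrict Ω).restrict S) :=
        eLpNorm_indicator_eq_eLpNorm_restrict hSm
    _ < ⊤ := Lp.eLpNorm_lt_top h

/-- Extension by zero as a linear map `L²(S) →ₗ L²_loc(Ω)`. -/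
def extL (d : ℕ) (Ω : Set (Fin d → ℝ)) (S : Set (Fin d → ℝ)) (hSm : MeasurableSet S) :
    Lp ℂ 2 ((volume.restrict Ω).restrict S) →ₗ[ℂ] L2loc d Ω where
  toFun h := ⟨extFun d Ω S hSm h, extFun_mem S hSm h⟩
  map_add' h₁ h₂ := by
    apply Subtype.ext
    show extFun d Ω S hSm (h₁ + h₂) = extFun d Ω S hSm h₁ + extFun d Ω S hSm h₂
    apply AEEqFun.ext
    have h12 := indicator_ae_congr (μ := volume.restrict Ω) hSm (Lp.coeFn_add h₁ h₂)
    have hca := AEEqFun.coeFn_add (extFun d Ω S hSm h₁) (extFun d Ω S hSm h₂)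
    filter_upwards [extFun_coeFn S hSm (h₁ + h₂), h12, hca, extFun_coeFn S hSm h₁,
      extFun_coeFn S hSm h₂] with x hx1 hx2 hx3 hx4 hx5
    rw [hx1, hx2, hx3, Pi.add_apply, hx4, hx5]
    by_cases hxS : x ∈ S <;> simp [hxS]
  map_smul' c h := by
    apply Subtype.ext
    show extFun d Ω S hSm (c • h) = c • extFun d Ω S hSm h
    apply AEEqFun.ext
    have h12 := indicator_ae_congr (μ := volume.restrict Ω) hSm (Lp.coeFn_smul c h)
    have hca := AEEqFun.coeFn_smul c (extFun d Ω S hSm h)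
    filter_upwards [extFun_coeFn S hSm (c • h), h12, hca, extFun_coeFn S hSm h]
      with x hx1 hx2 hx3 hx4
    rw [hx1, hx2, hx3, Pi.smul_apply, hx4]
    by_cases hxS : x ∈ S <;> simp [hxS]

lemma memℒp_conj {α : Type*} {m : MeasurableSpace α} {ν : Measure α} {u : α → ℂ}
    (hu : MemLp u 2 ν) : MemLp (fun x => conj (u x)) 2 ν := by
  refine ⟨(RCLike.continuous_conj).comp_aestronglyMeasurable hu.1, ?_⟩
  have : eLpNorm (fun x => conj (u x)) 2 ν = eLpNorm u 2 ν :=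
    eLpNorm_congr_norm_ae (Eventually.of_forall fun x => by simp)
  rw [this]; exact hu.2

lemma inner_toLp_eq {α : Type*} {m : MeasurableSpace α} {ν : Measure α} {u v : α → ℂ}
    (hu : MemLp u 2 ν) (hv : MemLp v 2 ν) :
    ⟪hu.toLp u, hv.toLp v⟫ = ∫ x, conj (u x) * v x ∂ν := by
  rw [MeasureTheory.L2.inner_def]
  apply integral_congr_ae
  filter_upwards [hu.coeFn_toLp, hv.coeFn_toLp] with x hx1 hx2
  rw [RCLike.inner_apply, hx1, hx2, mul_comm]

lemma integrable_conj_mul {α : Type*} {m : MeasurableSpace α} {ν : Measure α} {u v : α → ℂ}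
    (hu : MemLp u 2 ν) (hv : MemLp v 2 ν) :
    Integrable (fun x => conj (u x) * v x) ν := by
  refine (MeasureTheory.L2.integrable_inner (𝕜 := ℂ) (hu.toLp u) (hv.toLp v)).congr ?_
  filter_upwards [hu.coeFn_toLp, hv.coeFn_toLp] with x hx1 hx2
  rw [RCLike.inner_apply, hx1, hx2, mul_comm]

lemma integrable_mul_of_memℒp {α : Type*} {m : MeasurableSpace α} {ν : Measure α} {u v : α → ℂ}
    (hu : MemLp u 2 ν) (hv : MemLp v 2 ν) :
    Integrable (fun x => u x * v x) ν := by
  have := integrable_conj_mul (memℒp_conj hu) hv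
  simpa using this

/-- Cauchy–Schwarz bound for the pairing. -/
lemma norm_integral_mul_le {α : Type*} {m : MeasurableSpace α} {ν : Measure α} {u v : α → ℂ}
    (hu : MemLp u 2 ν) (hv : MemLp v 2 ν) :
    ‖∫ x, u x * v x ∂ν‖ ≤ (eLpNorm u 2 ν).toReal * (eLpNorm v 2 ν).toReal := by
  have hconj := memℒp_conj hu
  have h1 : ∫ x, u x * v x ∂ν = ⟪hconj.toLp _, hv.toLp v⟫ := by
    rw [inner_toLp_eq hconj hv]
    apply integral_congr_ae
    exact Eventually.of_forall fun x => by simp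
  rw [h1]
  have h2 := norm_inner_le_norm (𝕜 := ℂ) (hconj.toLp _) (hv.toLp v)
  have h3 : ‖MemLp.toLp _ hconj‖ = (eLpNorm u 2 ν).toReal := by
    rw [Lp.norm_toLp _ hconj]
    congr 1
    exact eLpNorm_congr_norm_ae (Eventually.of_forall fun x => by simp)
  have h4 : ‖hv.toLp v‖ = (eLpNorm v 2 ν).toReal := Lp.norm_toLp v hv
  rw [h3, h4] at h2
  exact h2

lemma L2locSeminorm_apply (K : Set (Fin d → ℝ)) (hK : IsCompact K) (hKΩ : K ⊆ Ω)
    (f : L2loc d Ω) :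
    L2locSeminorm d Ω K hK hKΩ f =
      (eLpNorm (⇑(f : (Fin d → ℝ) →ₘ[volume.restrict Ω] ℂ)) 2
        ((volume.restrict Ω).restrict K)).toReal := rfl

end AuxL2cpt

open MeasureTheory Set Filter
open scoped ENNReal ComplexConjugate ComplexInnerProductSpace

set_option maxHeartbeats 2000000 in
/-- **`L²_cpt(Ω)` is the topological dual of `L²_loc(Ω)`** (the paper's Theorem 2.9, scalar
case): for a nonempty open `Ω ⊆ ℝ^d` with `L²_loc(Ω)` carrying the topology of
`L²`-convergence on compact subsets, (1) every compactly supported `g ∈ L²_cpt(Ω)` gives a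
well-defined continuous linear functional `f ↦ ∫ f·g dλ` on `L²_loc(Ω)`, and (2) every
continuous linear functional on `L²_loc(Ω)` is represented in this way by a unique
`g ∈ L²_cpt(Ω)`. -/
theorem L2cpt_dual_of_L2loc (d : ℕ) (Ω : Set (Fin d → ℝ)) (hΩ : IsOpen Ω) (hne : Ω.Nonempty)
    (K : ℕ → Set (Fin d → ℝ)) (hKc : ∀ j, IsCompact (K j)) (hKΩ : ∀ j, K j ⊆ Ω)
    (hKint : ∀ j, K j ⊆ interior (K (j + 1))) (hKunion : (⋃ j, K j) = Ω) :
    (∀ g : L2loc d Ω, HasCompactEssSupport d Ω g →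
      (∀ f : L2loc d Ω,
        Integrable
          (fun x => (f : (Fin d → ℝ) →ₘ[volume.restrict Ω] ℂ) x *
            (g : (Fin d → ℝ) →ₘ[volume.restrict Ω] ℂ) x) (volume.restrict Ω)) ∧
      IsLinearMap ℂ (fun f : L2loc d Ω =>
        ∫ x, (f : (Fin d → ℝ) →ₘ[volume.restrict Ω] ℂ) x *
          (g : (Fin d → ℝ) →ₘ[volume.restrict Ω] ℂ) x ∂(volume.restrict Ω)) ∧
      @Continuous _ _ (L2locTopology d Ω K hKc hKΩ) _
        (fun f : L2loc d Ω =>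
          ∫ x, (f : (Fin d → ℝ) →ₘ[volume.restrict Ω] ℂ) x *
            (g : (Fin d → ℝ) →ₘ[volume.restrict Ω] ℂ) x ∂(volume.restrict Ω))) ∧
    (∀ Λ : L2loc d Ω →ₗ[ℂ] ℂ, @Continuous _ _ (L2locTopology d Ω K hKc hKΩ) _ Λ →
      ∃! g : L2loc d Ω, HasCompactEssSupport d Ω g ∧
        ∀ f : L2loc d Ω,
          Λ f = ∫ x, (f : (Fin d → ℝ) →ₘ[volume.restrict Ω] ℂ) x *
            (g : (Fin d → ℝ) →ₘ[volume.restrict Ω] ℂ) x ∂(volume.restrict Ω)) := by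
  classical
  have hKm : ∀ j, MeasurableSet (K j) := fun j => (hKc j).isClosed.measurableSet
  -- integrability of the pairing, for any compactly supported g
  have hint_all : ∀ g : L2loc d Ω, HasCompactEssSupport d Ω g → ∀ f : L2loc d Ω,
      Integrable
        (fun x => (f : (Fin d → ℝ) →ₘ[volume.restrict Ω] ℂ) x *
          (g : (Fin d → ℝ) →ₘ[volume.restrict Ω] ℂ) x) (volume.restrict Ω) := by
    rintro g ⟨C, hCcomp, hCΩ, hg0⟩ f
    obtain ⟨j, hCK⟩ := exists_K_superset hKint hKunion hCcomp hCΩ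
    have key : (fun x => (f : (Fin d → ℝ) →ₘ[volume.restrict Ω] ℂ) x *
          (g : (Fin d → ℝ) →ₘ[volume.restrict Ω] ℂ) x) =ᵐ[volume.restrict Ω]
        (K j).indicator (fun x => (f : (Fin d → ℝ) →ₘ[volume.restrict Ω] ℂ) x *
          (g : (Fin d → ℝ) →ₘ[volume.restrict Ω] ℂ) x) := by
      filter_upwards [hg0] with x hx
      by_cases hxK : x ∈ K j
      · rw [Set.indicator_of_mem hxK]
      · rw [Set.indicator_of_notMem hxK, hx fun hxC => hxK (hCK hxC), mul_zero]
    rw [integrable_congr key, integrable_indicator_iff (hKm j)]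
    exact integrable_mul_of_memℒp (memℒp_of_L2loc f (hKc j) (hKΩ j))
      (memℒp_of_L2loc g (hKc j) (hKΩ j))
  have hlin_all : ∀ g : L2loc d Ω, HasCompactEssSupport d Ω g →
      IsLinearMap ℂ (fun f : L2loc d Ω =>
        ∫ x, (f : (Fin d → ℝ) →ₘ[volume.restrict Ω] ℂ) x *
          (g : (Fin d → ℝ) →ₘ[volume.restrict Ω] ℂ) x ∂(volume.restrict Ω)) := by
    intro g hg
    constructor
    · intro f₁ f₂
      rw [← integral_add (hint_all g hg f₁) (hint_all g hg f₂)]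
      apply integral_congr_ae
      have hadd : ⇑((f₁ + f₂ : L2loc d Ω) : (Fin d → ℝ) →ₘ[volume.restrict Ω] ℂ)
          =ᵐ[volume.restrict Ω] ⇑(f₁ : (Fin d → ℝ) →ₘ[volume.restrict Ω] ℂ)
            + ⇑(f₂ : (Fin d → ℝ) →ₘ[volume.restrict Ω] ℂ) := AEEqFun.coeFn_add _ _
      filter_upwards [hadd] with x hx
      rw [hx, Pi.add_apply, add_mul]
    · intro c f
      rw [← integral_smul]
      apply integral_congr_ae
      have hsmul : ⇑((c • f : L2loc d Ω) : (Fin d → ℝ) →ₘ[volume.restrict Ω] ℂ)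
          =ᵐ[volume.restrict Ω]
            c • ⇑(f : (Fin d → ℝ) →ₘ[volume.restrict Ω] ℂ) := AEEqFun.coeFn_smul _ _
      filter_upwards [hsmul] with x hx
      rw [hx, Pi.smul_apply, smul_eq_mul, smul_eq_mul, mul_assoc]
  letI : TopologicalSpace (L2loc d Ω) := L2locTopology d Ω K hKc hKΩ
  have hws : WithSeminorms (L2locSeminormFamily d Ω K hKc hKΩ) := ⟨rfl⟩
  constructor
  · -- Part 1
    intro g hg
    refine ⟨hint_all g hg, hlin_all g hg, ?_⟩
    obtain ⟨C, hCcomp, hCΩ, hg0⟩ := hg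
    obtain ⟨j, hCK⟩ := exists_K_superset hKint hKunion hCcomp hCΩ
    have key : ∀ f : L2loc d Ω,
        (fun x => (f : (Fin d → ℝ) →ₘ[volume.restrict Ω] ℂ) x *
          (g : (Fin d → ℝ) →ₘ[volume.restrict Ω] ℂ) x) =ᵐ[volume.restrict Ω]
        (K j).indicator (fun x => (f : (Fin d → ℝ) →ₘ[volume.restrict Ω] ℂ) x *
          (g : (Fin d → ℝ) →ₘ[volume.restrict Ω] ℂ) x) := by
      intro f
      filter_upwards [hg0] with x hx
      by_cases hxK : x ∈ K j
      · rw [Set.indicator_of_mem hxK]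
      · rw [Set.indicator_of_notMem hxK, hx fun hxC => hxK (hCK hxC), mul_zero]
    set M : ℝ := (eLpNorm (⇑(g : (Fin d → ℝ) →ₘ[volume.restrict Ω] ℂ)) 2
      ((volume.restrict Ω).restrict (K j))).toReal with hM
    let Λg : L2loc d Ω →ₗ[ℂ] ℂ := (hlin_all g ⟨C, hCcomp, hCΩ, hg0⟩).mk' _
    have hcont : Continuous Λg := by
      apply Seminorm.cont_withSeminorms_normedSpace ℂ hws Λg
      refine ⟨{j}, M.toNNReal, ?_⟩
      rw [Seminorm.le_def]
      intro f
      have hbnd : ‖Λg f‖ ≤ M *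
          (eLpNorm (⇑(f : (Fin d → ℝ) →ₘ[volume.restrict Ω] ℂ)) 2
            ((volume.restrict Ω).restrict (K j))).toReal := by
        have h1 : Λg f = ∫ x, (f : (Fin d → ℝ) →ₘ[volume.restrict Ω] ℂ) x *
            (g : (Fin d → ℝ) →ₘ[volume.restrict Ω] ℂ) x
              ∂((volume.restrict Ω).restrict (K j)) := by
          show (∫ x, (f : (Fin d → ℝ) →ₘ[volume.restrict Ω] ℂ) x *
            (g : (Fin d → ℝ) →ₘ[volume.restrict Ω] ℂ) x ∂(volume.restrict Ω)) = _
          rw [integral_congr_ae (key f), integral_indicator (hKm j)]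
        rw [h1, mul_comm]
        exact norm_integral_mul_le (memℒp_of_L2loc f (hKc j) (hKΩ j))
          (memℒp_of_L2loc g (hKc j) (hKΩ j))
      refine hbnd.trans (le_of_eq ?_)
      have hM0 : (0:ℝ) ≤ M := ENNReal.toReal_nonneg
      rw [Seminorm.smul_apply, Finset.sup_singleton]
      show _ = M.toNNReal • (L2locSeminormFamily d Ω K hKc hKΩ j) f
      rw [L2locSeminormFamily, L2locSeminorm_apply, NNReal.smul_def,
        Real.coe_toNNReal M hM0, smul_eq_mul]
    exact hcont
  · -- Part 2
    intro Λ hΛ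
    obtain ⟨s, C, hC0, hC⟩ := Seminorm.bound_of_continuous hws ((normSeminorm ℂ ℂ).comp Λ)
      (by exact hΛ.norm : Continuous fun f : L2loc d Ω => ‖Λ f‖)
    set j : ℕ := s.sup id with hj
    set ν : Measure (Fin d → ℝ) := (volume.restrict Ω).restrict (K j) with hν
    have hbound : ∀ f : L2loc d Ω, ‖Λ f‖ ≤ C *
        (eLpNorm (⇑(f : (Fin d → ℝ) →ₘ[volume.restrict Ω] ℂ)) 2 ν).toReal := by
      intro f
      have h1 : ‖Λ f‖ ≤ (C • s.sup (L2locSeminormFamily d Ω K hKc hKΩ)) f := hC f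
      rw [Seminorm.smul_apply, NNReal.smul_def, smul_eq_mul] at h1
      refine h1.trans ?_
      refine mul_le_mul_of_nonneg_left ?_ C.coe_nonneg
      refine Seminorm.finset_sup_apply_le ENNReal.toReal_nonneg fun i hi => ?_
      rw [L2locSeminormFamily, L2locSeminorm_apply]
      refine ENNReal.toReal_mono (f.2 (K j) (hKc j) (hKΩ j)).ne ?_
      exact eLpNorm_mono_measure _
        (Measure.restrict_mono (Kmono hKint (Finset.le_sup (f := id) hi)) le_rfl)
    have hker : ∀ f₁ f₂ : L2loc d Ω,
        ⇑(f₁ : (Fin d → ℝ) →ₘ[volume.restrict Ω] ℂ)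
          =ᵐ[ν] ⇑(f₂ : (Fin d → ℝ) →ₘ[volume.restrict Ω] ℂ) → Λ f₁ = Λ f₂ := by
      intro f₁ f₂ h
      have hsub : ⇑((f₁ - f₂ : L2loc d Ω) : (Fin d → ℝ) →ₘ[volume.restrict Ω] ℂ)
          =ᵐ[volume.restrict Ω] ⇑(f₁ : (Fin d → ℝ) →ₘ[volume.restrict Ω] ℂ)
            - ⇑(f₂ : (Fin d → ℝ) →ₘ[volume.restrict Ω] ℂ) := AEEqFun.coeFn_sub _ _
      have h0 : eLpNorm (⇑((f₁ - f₂ : L2loc d Ω) : (Fin d → ℝ) →ₘ[volume.restrict Ω] ℂ)) 2 ν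
          = 0 := by
        have hz : ⇑((f₁ - f₂ : L2loc d Ω) : (Fin d → ℝ) →ₘ[volume.restrict Ω] ℂ)
            =ᵐ[ν] (0 : (Fin d → ℝ) → ℂ) := by
          filter_upwards [hsub.restrict, h] with x hx1 hx2
          rw [hx1, Pi.sub_apply, hx2, sub_self]
          rfl
        rw [eLpNorm_congr_ae hz, eLpNorm_zero]
      have hb := hbound (f₁ - f₂)
      rw [h0, ENNReal.toReal_zero, mul_zero] at hb
      have h2 : Λ (f₁ - f₂) = 0 := norm_le_zero_iff.mp hb
      have h4 : Λ f₁ = Λ f₂ + Λ (f₁ - f₂) := by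
        rw [← map_add]
        congr 1
        abel
      rw [h4, h2, add_zero]
    set E := extL d Ω (K j) (hKm j) with hE
    have hEcoe : ∀ h : Lp ℂ 2 ν,
        ⇑((E h : L2loc d Ω) : (Fin d → ℝ) →ₘ[volume.restrict Ω] ℂ)
          =ᵐ[volume.restrict Ω] (K j).indicator ⇑h := fun h => extFun_coeFn _ (hKm j) h
    have hφb : ∀ h : Lp ℂ 2 ν, ‖(Λ ∘ₗ E) h‖ ≤ ↑C * ‖h‖ := by
      intro h
      refine (hbound (E h)).trans ?_
      have heq : eLpNorm (⇑((E h : L2loc d Ω) : (Fin d → ℝ) →ₘ[volume.restrict Ω] ℂ)) 2 ν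
          = eLpNorm (⇑h) 2 ν := by
        apply eLpNorm_congr_ae
        exact ((hEcoe h).restrict).trans (indicator_ae_eq_restrict (hKm j))
      rw [heq, ← Lp.norm_def]
    let φ : Lp ℂ 2 ν →L[ℂ] ℂ := LinearMap.mkContinuous (Λ ∘ₗ E) C hφb
    set g₀ : Lp ℂ 2 ν := (InnerProductSpace.toDual ℂ (Lp ℂ 2 ν)).symm φ with hg₀def
    have hg₀ : ∀ h : Lp ℂ 2 ν, ⟪g₀, h⟫ = Λ (E h) := by
      intro h
      rw [hg₀def, InnerProductSpace.toDual_symm_apply]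
      rfl
    have hg₀conj : MemLp (fun x => conj (g₀ x)) 2 ν := memℒp_conj (Lp.memLp g₀)
    set g : L2loc d Ω := E (hg₀conj.toLp _) with hgdef
    have hgcoe : ⇑((g : L2loc d Ω) : (Fin d → ℝ) →ₘ[volume.restrict Ω] ℂ)
        =ᵐ[volume.restrict Ω] (K j).indicator fun x => conj (g₀ x) :=
      (hEcoe _).trans (indicator_ae_congr (hKm j) hg₀conj.coeFn_toLp)
    have hgsupp : HasCompactEssSupport d Ω g := by
      refine ⟨K j, hKc j, hKΩ j, ?_⟩
      filter_upwards [hgcoe] with x hx hxK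
      rw [hx, Set.indicator_of_notMem hxK]
    have hgν : ⇑((g : L2loc d Ω) : (Fin d → ℝ) →ₘ[volume.restrict Ω] ℂ)
        =ᵐ[ν] fun x => conj (g₀ x) :=
      (hgcoe.restrict).trans (indicator_ae_eq_restrict (hKm j))
    have hrep : ∀ f : L2loc d Ω,
        Λ f = ∫ x, (f : (Fin d → ℝ) →ₘ[volume.restrict Ω] ℂ) x *
          (g : (Fin d → ℝ) →ₘ[volume.restrict Ω] ℂ) x ∂(volume.restrict Ω) := by
      intro f
      have hfK : MemLp (⇑(f : (Fin d → ℝ) →ₘ[volume.restrict Ω] ℂ)) 2 ν :=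
        memℒp_of_L2loc f (hKc j) (hKΩ j)
      have h1 : Λ f = Λ (E (hfK.toLp _)) := by
        apply hker
        exact (((hEcoe _).restrict).trans
          ((indicator_ae_eq_restrict (hKm j)).trans hfK.coeFn_toLp)).symm
      have h2 : Λ (E (hfK.toLp _)) = ⟪g₀, hfK.toLp _⟫ := (hg₀ _).symm
      have h3 : ⟪g₀, hfK.toLp _⟫
          = ∫ x, conj (g₀ x) * (f : (Fin d → ℝ) →ₘ[volume.restrict Ω] ℂ) x ∂ν := by
        have := inner_toLp_eq (Lp.memLp g₀) hfK
        rwa [Lp.toLp_coeFn g₀ (Lp.memLp g₀)] at this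
      have h4 : (∫ x, conj (g₀ x) * (f : (Fin d → ℝ) →ₘ[volume.restrict Ω] ℂ) x ∂ν)
          = ∫ x, (f : (Fin d → ℝ) →ₘ[volume.restrict Ω] ℂ) x *
              (g : (Fin d → ℝ) →ₘ[volume.restrict Ω] ℂ) x ∂ν := by
        apply integral_congr_ae
        filter_upwards [hgν] with x hx
        rw [hx, mul_comm]
      have h5 : (∫ x, (f : (Fin d → ℝ) →ₘ[volume.restrict Ω] ℂ) x *
              (g : (Fin d → ℝ) →ₘ[volume.restrict Ω] ℂ) x ∂ν)
          = ∫ x, (f : (Fin d → ℝ) →ₘ[volume.restrict Ω] ℂ) x *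
              (g : (Fin d → ℝ) →ₘ[volume.restrict Ω] ℂ) x ∂(volume.restrict Ω) := by
        rw [hν, ← integral_indicator (hKm j)]
        apply integral_congr_ae
        symm
        filter_upwards [hgcoe] with x hx
        by_cases hxK : x ∈ K j
        · rw [Set.indicator_of_mem hxK]
        · rw [Set.indicator_of_notMem hxK, hx, Set.indicator_of_notMem hxK, mul_zero]
      rw [h1, h2, h3, h4, h5]
    refine ⟨g, ⟨hgsupp, hrep⟩, ?_⟩
    -- uniqueness
    rintro g' ⟨hg'supp, hg'rep⟩
    set w : L2loc d Ω := g' - g with hw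
    have hwcoe : ⇑((w : L2loc d Ω) : (Fin d → ℝ) →ₘ[volume.restrict Ω] ℂ)
        =ᵐ[volume.restrict Ω] ⇑((g' : L2loc d Ω) : (Fin d → ℝ) →ₘ[volume.restrict Ω] ℂ)
          - ⇑((g : L2loc d Ω) : (Fin d → ℝ) →ₘ[volume.restrict Ω] ℂ) := AEEqFun.coeFn_sub _ _
    -- the conjugate test function
    have hconjmeas : AEStronglyMeasurable
        (fun x => conj (((w : L2loc d Ω) : (Fin d → ℝ) →ₘ[volume.restrict Ω] ℂ) x))
        (volume.restrict Ω) :=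
      RCLike.continuous_conj.comp_aestronglyMeasurable
        ((w : (Fin d → ℝ) →ₘ[volume.restrict Ω] ℂ)).aestronglyMeasurable
    have hconjmem : AEEqFun.mk _ hconjmeas ∈ L2loc d Ω := by
      intro S hS hSΩ
      rw [eLpNorm_congr_ae (AEEqFun.coeFn_mk _ _).restrict]
      have heq : eLpNorm
          (fun x => conj (((w : L2loc d Ω) : (Fin d → ℝ) →ₘ[volume.restrict Ω] ℂ) x)) 2
          ((volume.restrict Ω).restrict S)
          = eLpNorm (⇑((w : L2loc d Ω) : (Fin d → ℝ) →ₘ[volume.restrict Ω] ℂ)) 2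
            ((volume.restrict Ω).restrict S) :=
        eLpNorm_congr_norm_ae (Filter.Eventually.of_forall fun x => by simp)
      rw [heq]
      exact w.2 S hS hSΩ
    set t : L2loc d Ω := ⟨AEEqFun.mk _ hconjmeas, hconjmem⟩ with ht
    have htcoe : ⇑((t : L2loc d Ω) : (Fin d → ℝ) →ₘ[volume.restrict Ω] ℂ)
        =ᵐ[volume.restrict Ω]
          fun x => conj (((w : L2loc d Ω) : (Fin d → ℝ) →ₘ[volume.restrict Ω] ℂ) x) :=
      AEEqFun.coeFn_mk _ _
    have hzero : (∫ x, (t : (Fin d → ℝ) →ₘ[volume.restrict Ω] ℂ) x *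
        (w : (Fin d → ℝ) →ₘ[volume.restrict Ω] ℂ) x ∂(volume.restrict Ω)) = 0 := by
      have hi1 := hint_all g' hg'supp t
      have hi2 := hint_all g hgsupp t
      have hsplit : (∫ x, (t : (Fin d → ℝ) →ₘ[volume.restrict Ω] ℂ) x *
            (w : (Fin d → ℝ) →ₘ[volume.restrict Ω] ℂ) x ∂(volume.restrict Ω))
          = (∫ x, (t : (Fin d → ℝ) →ₘ[volume.restrict Ω] ℂ) x *
              (g' : (Fin d → ℝ) →ₘ[volume.restrict Ω] ℂ) x ∂(volume.restrict Ω))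
            - ∫ x, (t : (Fin d → ℝ) →ₘ[volume.restrict Ω] ℂ) x *
              (g : (Fin d → ℝ) →ₘ[volume.restrict Ω] ℂ) x ∂(volume.restrict Ω) := by
        rw [← integral_sub hi1 hi2]
        apply integral_congr_ae
        filter_upwards [hwcoe] with x hx
        rw [Pi.sub_apply] at hx
        rw [hx, mul_sub]
      rw [hsplit, ← hg'rep t, ← hrep t, sub_self]
    have hintw : Integrable (fun x => (t : (Fin d → ℝ) →ₘ[volume.restrict Ω] ℂ) x *
        (w : (Fin d → ℝ) →ₘ[volume.restrict Ω] ℂ) x) (volume.restrict Ω) := by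
      have hi1 := hint_all g' hg'supp t
      have hi2 := hint_all g hgsupp t
      refine ((hi1.sub hi2).congr ?_)
      filter_upwards [hwcoe] with x hx
      rw [Pi.sub_apply] at hx
      rw [hx, mul_sub]
      rfl
    have hptw : (fun x => (t : (Fin d → ℝ) →ₘ[volume.restrict Ω] ℂ) x *
          (w : (Fin d → ℝ) →ₘ[volume.restrict Ω] ℂ) x) =ᵐ[volume.restrict Ω]
        fun x => ((‖((w : L2loc d Ω) : (Fin d → ℝ) →ₘ[volume.restrict Ω] ℂ) x‖ ^ 2 : ℝ) : ℂ) := by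
      filter_upwards [htcoe] with x hx
      rw [hx, RCLike.conj_mul]
      norm_cast
    have hnormint : Integrable
        (fun x => ‖((w : L2loc d Ω) : (Fin d → ℝ) →ₘ[volume.restrict Ω] ℂ) x‖ ^ 2)
        (volume.restrict Ω) := by
      have := hintw.norm
      refine this.congr ?_
      filter_upwards [hptw] with x hx
      rw [hx, Complex.norm_real, Real.norm_eq_abs]
      exact abs_of_nonneg (sq_nonneg _)
    have hnormzero : (∫ x, ‖((w : L2loc d Ω) : (Fin d → ℝ) →ₘ[volume.restrict Ω] ℂ) x‖ ^ 2
        ∂(volume.restrict Ω)) = 0 := by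
      have h1 : (∫ x, (t : (Fin d → ℝ) →ₘ[volume.restrict Ω] ℂ) x *
            (w : (Fin d → ℝ) →ₘ[volume.restrict Ω] ℂ) x ∂(volume.restrict Ω))
          = ((∫ x, ‖((w : L2loc d Ω) : (Fin d → ℝ) →ₘ[volume.restrict Ω] ℂ) x‖ ^ 2
              ∂(volume.restrict Ω) : ℝ) : ℂ) := by
        rw [integral_congr_ae hptw]
        exact integral_ofReal (𝕜 := ℂ)
      rw [hzero] at h1
      exact_mod_cast h1.symm
    have hwzero : ⇑((w : L2loc d Ω) : (Fin d → ℝ) →ₘ[volume.restrict Ω] ℂ)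
        =ᵐ[volume.restrict Ω] 0 := by
      have := (integral_eq_zero_iff_of_nonneg_ae
        (Filter.Eventually.of_forall fun x => sq_nonneg _) hnormint).mp hnormzero
      filter_upwards [this] with x hx
      simp only [Pi.zero_apply] at hx ⊢
      have : ‖((w : L2loc d Ω) : (Fin d → ℝ) →ₘ[volume.restrict Ω] ℂ) x‖ = 0 := by
        nlinarith [norm_nonneg (((w : L2loc d Ω) : (Fin d → ℝ) →ₘ[volume.restrict Ω] ℂ) x), hx]
      exact norm_eq_zero.mp this
    apply sub_eq_zero.mp
    apply Subtype.ext
    show ((g' - g : L2loc d Ω) : (Fin d → ℝ) →ₘ[volume.restrict Ω] ℂ) = 0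
    apply AEEqFun.ext
    refine hwzero.trans ?_
    exact (AEEqFun.coeFn_zero).symm
end

section
/- Let Ω be a nonempty open subset of ℝ^d. Let Λ : L²_cpt(Ω) → ℂ be a linear functional such that, for every compact K ⊆ Ω, the restriction of Λ to L²_K(Ω) = {g ∈ L²_cpt(Ω) : essential support of g contained in K} is continuous with respect to the L²-norm. Then there exists f ∈ L²_loc(Ω), unique up to equality almost everywhere, such that Λ(g) = ∫_Ω f·g dλ for all g ∈ L²_cpt(Ω). Conversely, every f ∈ L²_loc(Ω) defines such a functional. In particular, the pairing (f,g) ↦ ∫_Ω f·g dλ identifies L²_loc(Ω) with the topological dual of L²_cpt(Ω) carrying the locally convex inductive limit (LF) topology of the subspaces L²_K(Ω). -/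
open MeasureTheory

noncomputable section

/-- `L²_cpt(Ω)`: the subspace of `L²_loc(Ω)` of elements with compact essential support
in `Ω`. -/
def L2cpt (d : ℕ) (Ω : Set (Fin d → ℝ)) : Submodule ℂ (L2loc d Ω) where
  carrier := {f | HasCompactEssSupport d Ω f}
  add_mem' := by
    rintro a b ⟨Ca, hCa, hCaΩ, ha⟩ ⟨Cb, hCb, hCbΩ, hb⟩
    refine ⟨Ca ∪ Cb, hCa.union hCb, Set.union_subset hCaΩ hCbΩ, ?_⟩
    filter_upwards [AEEqFun.coeFn_add
      (a : (Fin d → ℝ) →ₘ[volume.restrict Ω] ℂ) (b : (Fin d → ℝ) →ₘ[volume.restrict Ω] ℂ),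
      ha, hb] with x hx ha' hb' hxC
    simp only [Submodule.coe_add]
    rw [hx, Pi.add_apply, ha' (fun h => hxC (Set.mem_union_left _ h)),
      hb' (fun h => hxC (Set.mem_union_right _ h)), add_zero]
  zero_mem' := by
    refine ⟨∅, isCompact_empty, Set.empty_subset _, ?_⟩
    filter_upwards [AEEqFun.coeFn_zero (β := ℂ) (μ := volume.restrict Ω)] with x hx _
    simpa using hx
  smul_mem' := by
    rintro c a ⟨C, hC, hCΩ, ha⟩
    refine ⟨C, hC, hCΩ, ?_⟩
    filter_upwards [AEEqFun.coeFn_smul c (a : (Fin d → ℝ) →ₘ[volume.restrict Ω] ℂ), ha]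
      with x hx ha' hxC
    simp only [Submodule.coe_smul]
    rw [hx, Pi.smul_apply, ha' hxC, smul_zero]

end

noncomputable section Aux
open Set

variable {d : ℕ} {Ω : Set (Fin d → ℝ)}

private lemma L2loc_spec (f : L2loc d Ω) {K : Set (Fin d → ℝ)} (hK : IsCompact K) (hKΩ : K ⊆ Ω) :
    eLpNorm (⇑(f : (Fin d → ℝ) →ₘ[volume.restrict Ω] ℂ)) 2 ((volume.restrict Ω).restrict K) < ⊤ :=
  f.2 K hK hKΩ

private lemma mem_L2loc_of {φ : (Fin d → ℝ) → ℂ} (hm : AEStronglyMeasurable φ (volume.restrict Ω))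
    {K : Set (Fin d → ℝ)} (hKm : MeasurableSet K)
    (hsupp : ∀ x, x ∉ K → φ x = 0)
    (hfin : eLpNorm φ 2 ((volume.restrict Ω).restrict K) < ⊤) :
    AEEqFun.mk φ hm ∈ L2loc d Ω := by
  intro C hC hCΩ
  have hφ : φ = K.indicator φ := by
    funext x; by_cases hx : x ∈ K
    · simp [Set.indicator_of_mem hx]
    · simp [Set.indicator_of_notMem hx, hsupp x hx]
  calc eLpNorm (⇑(AEEqFun.mk φ hm)) 2 ((volume.restrict Ω).restrict C)
      = eLpNorm φ 2 ((volume.restrict Ω).restrict C) :=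
        eLpNorm_congr_ae (AEEqFun.coeFn_mk φ hm).restrict
    _ ≤ eLpNorm φ 2 (volume.restrict Ω) := eLpNorm_mono_measure _ Measure.restrict_le_self
    _ = eLpNorm (K.indicator φ) 2 (volume.restrict Ω) := by rw [← hφ]
    _ = eLpNorm φ 2 ((volume.restrict Ω).restrict K) :=
        eLpNorm_indicator_eq_eLpNorm_restrict hKm
    _ < ⊤ := hfin

/-- Build an element of `L2cpt` from a function supported in a compact `K ⊆ Ω`. -/
private def mkCpt {φ : (Fin d → ℝ) → ℂ} (hm : AEStronglyMeasurable φ (volume.restrict Ω))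
    {K : Set (Fin d → ℝ)} (hK : IsCompact K) (hKΩ : K ⊆ Ω)
    (hsupp : ∀ x, x ∉ K → φ x = 0)
    (hfin : eLpNorm φ 2 ((volume.restrict Ω).restrict K) < ⊤) : L2cpt d Ω :=
  ⟨⟨AEEqFun.mk φ hm, mem_L2loc_of hm hK.measurableSet hsupp hfin⟩, K, hK, hKΩ, by
    filter_upwards [AEEqFun.coeFn_mk φ hm] with x hx hxK
    exact hx.trans (hsupp x hxK)⟩

private lemma mkCpt_coeFn {φ : (Fin d → ℝ) → ℂ} (hm : AEStronglyMeasurable φ (volume.restrict Ω))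
    {K : Set (Fin d → ℝ)} (hK : IsCompact K) (hKΩ : K ⊆ Ω)
    (hsupp : ∀ x, x ∉ K → φ x = 0)
    (hfin : eLpNorm φ 2 ((volume.restrict Ω).restrict K) < ⊤) :
    ⇑(((mkCpt hm hK hKΩ hsupp hfin : L2cpt d Ω) : L2loc d Ω) :
      (Fin d → ℝ) →ₘ[volume.restrict Ω] ℂ) =ᵐ[volume.restrict Ω] φ :=
  AEEqFun.coeFn_mk φ hm

private lemma eLpNorm_lt_top_of_cpt (g : L2cpt d Ω) :
    eLpNorm (⇑((g : L2loc d Ω) : (Fin d → ℝ) →ₘ[volume.restrict Ω] ℂ)) 2 (volume.restrict Ω) < ⊤ := by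
  obtain ⟨C, hC, hCΩ, h0⟩ := g.2
  have h1 : ⇑((g : L2loc d Ω) : (Fin d → ℝ) →ₘ[volume.restrict Ω] ℂ) =ᵐ[volume.restrict Ω]
      C.indicator ⇑((g : L2loc d Ω) : (Fin d → ℝ) →ₘ[volume.restrict Ω] ℂ) := by
    filter_upwards [h0] with x hx
    by_cases hxC : x ∈ C
    · simp [Set.indicator_of_mem hxC]
    · simp [Set.indicator_of_notMem hxC, hx hxC]
  rw [eLpNorm_congr_ae h1, eLpNorm_indicator_eq_eLpNorm_restrict hC.measurableSet]
  exact L2loc_spec _ hC hCΩ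

/-- The element of `Lp ℂ 2` determined by an element of `L2cpt`. -/
private def gL (g : L2cpt d Ω) : Lp ℂ 2 (volume.restrict Ω) :=
  ⟨((g : L2loc d Ω) : (Fin d → ℝ) →ₘ[volume.restrict Ω] ℂ),
    Lp.mem_Lp_iff_eLpNorm_lt_top.mpr (eLpNorm_lt_top_of_cpt g)⟩

private lemma gL_coe (g : L2cpt d Ω) :
    ⇑(gL g) = ⇑((g : L2loc d Ω) : (Fin d → ℝ) →ₘ[volume.restrict Ω] ℂ) := rfl

end Aux

noncomputable section Riesz
open Set
variable {d : ℕ} {Ω : Set (Fin d → ℝ)}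

set_option maxHeartbeats 1000000 in
private lemma exists_repr_on (Λ : L2cpt d Ω →ₗ[ℂ] ℂ)
    {K : Set (Fin d → ℝ)} (hK : IsCompact K) (hKΩ : K ⊆ Ω)
    (hM : ∃ M : ℝ, ∀ g : L2cpt d Ω,
      (∀ᵐ x ∂(volume.restrict Ω), x ∉ K →
        ((g : L2loc d Ω) : (Fin d → ℝ) →ₘ[volume.restrict Ω] ℂ) x = 0) →
      ‖Λ g‖ ≤ M * (eLpNorm ((g : L2loc d Ω) : (Fin d → ℝ) →ₘ[volume.restrict Ω] ℂ) 2
        (volume.restrict Ω)).toReal) :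
    ∃ v : Lp ℂ 2 (volume.restrict Ω), ∀ g : L2cpt d Ω,
      (∀ᵐ x ∂(volume.restrict Ω), x ∉ K →
        ((g : L2loc d Ω) : (Fin d → ℝ) →ₘ[volume.restrict Ω] ℂ) x = 0) →
      Λ g = ∫ x, (starRingEnd ℂ) (v x) *
        ((g : L2loc d Ω) : (Fin d → ℝ) →ₘ[volume.restrict Ω] ℂ) x ∂(volume.restrict Ω) := by
  obtain ⟨M, hM⟩ := hM
  -- data for mkCpt applied to indicator functions
  have hmem : ∀ u : Lp ℂ 2 (volume.restrict Ω),
      eLpNorm (K.indicator ⇑u) 2 ((volume.restrict Ω).restrict K) < ⊤ := by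
    intro u
    calc eLpNorm (K.indicator ⇑u) 2 ((volume.restrict Ω).restrict K)
        ≤ eLpNorm (K.indicator ⇑u) 2 (volume.restrict Ω) :=
          eLpNorm_mono_measure _ Measure.restrict_le_self
      _ ≤ eLpNorm ⇑u 2 (volume.restrict Ω) := eLpNorm_indicator_le _
      _ < ⊤ := Lp.eLpNorm_lt_top u
  set P : Lp ℂ 2 (volume.restrict Ω) → L2cpt d Ω := fun u =>
    mkCpt ((Lp.aestronglyMeasurable u).indicator hK.measurableSet) hK hKΩ
      (fun x hx => Set.indicator_of_notMem hx _) (hmem u) with hP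
  have hPcoe : ∀ u, ⇑(((P u : L2cpt d Ω) : L2loc d Ω) : (Fin d → ℝ) →ₘ[volume.restrict Ω] ℂ)
      =ᵐ[volume.restrict Ω] K.indicator ⇑u := fun u => mkCpt_coeFn _ _ _ _ _
  have hPvan : ∀ u, ∀ᵐ x ∂(volume.restrict Ω), x ∉ K →
      ((P u : L2loc d Ω) : (Fin d → ℝ) →ₘ[volume.restrict Ω] ℂ) x = 0 := by
    intro u
    filter_upwards [hPcoe u] with x hx hxK
    rw [hx, Set.indicator_of_notMem hxK]
  -- linearity of u ↦ P u at the level of Λ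
  have hPadd : ∀ u v : Lp ℂ 2 (volume.restrict Ω), P (u + v) = P u + P v := by
    intro u v
    apply Subtype.ext; apply Subtype.ext
    apply AEEqFun.ext
    have h1 := hPcoe (u + v)
    have h2 := hPcoe u
    have h3 := hPcoe v
    have h4 : ⇑((((P u + P v : L2cpt d Ω) : L2loc d Ω)) :
        (Fin d → ℝ) →ₘ[volume.restrict Ω] ℂ) =ᵐ[volume.restrict Ω]
        (fun x => K.indicator (⇑u) x + K.indicator (⇑v) x) := by
      have := AEEqFun.coeFn_add
        (((P u : L2cpt d Ω) : L2loc d Ω) : (Fin d → ℝ) →ₘ[volume.restrict Ω] ℂ)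
        (((P v : L2cpt d Ω) : L2loc d Ω) : (Fin d → ℝ) →ₘ[volume.restrict Ω] ℂ)
      filter_upwards [this, h2, h3] with x hx h2x h3x
      exact hx.trans (by rw [Pi.add_apply, h2x, h3x])
    filter_upwards [h1, h4, Lp.coeFn_add u v] with x h1x h4x haddx
    rw [h1x, h4x]
    by_cases hxK : x ∈ K
    · simp only [Set.indicator_of_mem hxK]; rw [haddx]; rfl
    · simp [Set.indicator_of_notMem hxK]
  have hPsmul : ∀ (c : ℂ) (u : Lp ℂ 2 (volume.restrict Ω)), P (c • u) = c • P u := by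
    intro c u
    apply Subtype.ext; apply Subtype.ext
    apply AEEqFun.ext
    have h1 := hPcoe (c • u)
    have h2 := hPcoe u
    have h4 : ⇑((((c • P u : L2cpt d Ω) : L2loc d Ω)) :
        (Fin d → ℝ) →ₘ[volume.restrict Ω] ℂ) =ᵐ[volume.restrict Ω]
        (fun x => c • K.indicator (⇑u) x) := by
      have := AEEqFun.coeFn_smul c
        (((P u : L2cpt d Ω) : L2loc d Ω) : (Fin d → ℝ) →ₘ[volume.restrict Ω] ℂ)
      filter_upwards [this, h2] with x hx h2x
      exact hx.trans (by rw [Pi.smul_apply, h2x])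
    filter_upwards [h1, h4, Lp.coeFn_smul c u] with x h1x h4x hsx
    rw [h1x, h4x]
    by_cases hxK : x ∈ K
    · simp only [Set.indicator_of_mem hxK]; rw [hsx]; rfl
    · simp [Set.indicator_of_notMem hxK]
  set T : Lp ℂ 2 (volume.restrict Ω) →ₗ[ℂ] ℂ :=
    { toFun := fun u => Λ (P u)
      map_add' := fun u v => by rw [hPadd, map_add]
      map_smul' := fun c u => by rw [hPsmul, Λ.map_smul]; rfl } with hT
  have hbound : ∃ C : ℝ, ∀ u, ‖T u‖ ≤ C * ‖u‖ := by
    refine ⟨max M 0, fun u => ?_⟩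
    have h1 : ‖Λ (P u)‖ ≤ M * (eLpNorm (((P u : L2cpt d Ω) : L2loc d Ω) :
        (Fin d → ℝ) →ₘ[volume.restrict Ω] ℂ) 2 (volume.restrict Ω)).toReal :=
      hM _ (hPvan u)
    have h2 : eLpNorm (((P u : L2cpt d Ω) : L2loc d Ω) :
        (Fin d → ℝ) →ₘ[volume.restrict Ω] ℂ) 2 (volume.restrict Ω) ≤
        eLpNorm ⇑u 2 (volume.restrict Ω) := by
      rw [eLpNorm_congr_ae (hPcoe u)]
      exact eLpNorm_indicator_le _
    have h3 := ENNReal.toReal_mono (Lp.eLpNorm_lt_top u).ne h2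
    calc ‖T u‖ ≤ M * (eLpNorm (((P u : L2cpt d Ω) : L2loc d Ω) :
          (Fin d → ℝ) →ₘ[volume.restrict Ω] ℂ) 2 (volume.restrict Ω)).toReal := h1
      _ ≤ max M 0 * (eLpNorm (((P u : L2cpt d Ω) : L2loc d Ω) :
          (Fin d → ℝ) →ₘ[volume.restrict Ω] ℂ) 2 (volume.restrict Ω)).toReal :=
          mul_le_mul_of_nonneg_right (le_max_left _ _) ENNReal.toReal_nonneg
      _ ≤ max M 0 * ‖u‖ := by
          rw [Lp.norm_def]
          exact mul_le_mul_of_nonneg_left h3 (le_max_right _ _)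
  set Φ : Lp ℂ 2 (volume.restrict Ω) →L[ℂ] ℂ := T.mkContinuousOfExistsBound hbound with hΦ
  set v : Lp ℂ 2 (volume.restrict Ω) :=
    (InnerProductSpace.toDual ℂ (Lp ℂ 2 (volume.restrict Ω))).symm Φ with hv
  have hvv : ∀ u, inner ℂ v u = Φ u := by
    intro u
    rw [← InnerProductSpace.toDual_apply_apply]
    congr 1
    exact (InnerProductSpace.toDual ℂ (Lp ℂ 2 (volume.restrict Ω))).apply_symm_apply Φ
  refine ⟨v, fun g hg => ?_⟩
  have hPg : P (gL g) = g := by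
    apply Subtype.ext; apply Subtype.ext
    apply AEEqFun.ext
    filter_upwards [hPcoe (gL g), hg] with x hx hgx
    rw [hx, gL_coe]
    by_cases hxK : x ∈ K
    · rw [Set.indicator_of_mem hxK]
    · rw [Set.indicator_of_notMem hxK, hgx hxK]
  have h1 : Λ g = Φ (gL g) := by rw [show Φ (gL g) = Λ (P (gL g)) from rfl, hPg]
  rw [h1, ← hvv (gL g), L2.inner_def]
  refine integral_congr_ae ?_
  filter_upwards with x
  rw [RCLike.inner_apply', gL_coe]

end Riesz
variable {d : ℕ} {Ω : Set (Fin d → ℝ)}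

open Set Metric

/-- Exhaustion of `Ω` by compacts. -/
private def KK (Ω : Set (Fin d → ℝ)) (n : ℕ) : Set (Fin d → ℝ) :=
  Metric.closedBall 0 (n + 1) ∩ {x | ∀ y, y ∉ Ω → ((n : ℝ) + 1)⁻¹ ≤ dist x y}

private lemma KK_compact (n : ℕ) : IsCompact (KK Ω n) := by
  refine (isCompact_closedBall _ _).inter_right ?_
  have : {x : Fin d → ℝ | ∀ y, y ∉ Ω → ((n : ℝ) + 1)⁻¹ ≤ dist x y}
      = ⋂ y ∈ Ωᶜ, {x | ((n : ℝ) + 1)⁻¹ ≤ dist x y} := by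
    ext x; simp only [Set.mem_iInter, Set.mem_setOf_eq, Set.mem_compl_iff]
  rw [this]
  exact isClosed_biInter fun y _ => isClosed_le continuous_const (continuous_id.dist continuous_const)

private lemma KK_subset (hΩ : IsOpen Ω) (n : ℕ) : KK Ω n ⊆ Ω := by
  intro x hx
  by_contra hxΩ
  have h := hx.2 x hxΩ
  simp only [dist_self] at h
  have : (0:ℝ) < (n:ℝ)+1 := by positivity
  exact absurd h (by simpa using (inv_pos.mpr this).not_ge)

private lemma KK_mono {m n : ℕ} (h : m ≤ n) : KK Ω m ⊆ KK Ω n := by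
  intro x hx
  have hmn : (m:ℝ) + 1 ≤ (n:ℝ) + 1 := by
    have := (Nat.cast_le (α := ℝ)).mpr h
    linarith
  refine ⟨closedBall_subset_closedBall hmn hx.1, fun y hy => le_trans ?_ (hx.2 y hy)⟩
  have hm : (0:ℝ) < m + 1 := by positivity
  exact inv_anti₀ hm hmn

private lemma KK_covers (hΩ : IsOpen Ω) {C : Set (Fin d → ℝ)} (hC : IsCompact C) (hCΩ : C ⊆ Ω) :
    ∃ n, C ⊆ KK Ω n := by
  obtain ⟨δ, hδ, hthick⟩ := hC.exists_thickening_subset_open hΩ hCΩ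
  obtain ⟨R, hR⟩ := hC.isBounded.subset_closedBall 0
  obtain ⟨n, hn⟩ := exists_nat_ge (max R δ⁻¹)
  refine ⟨n, fun x hx => ⟨closedBall_subset_closedBall ?_ (hR hx), fun y hy => ?_⟩⟩
  · exact le_trans (le_trans (le_max_left _ _) hn) (by linarith)
  · by_contra hlt
    push_neg at hlt
    have h1 : δ⁻¹ ≤ (n : ℝ) + 1 := le_trans (le_trans (le_max_right _ _) hn) (by linarith)
    have h2 : ((n : ℝ) + 1)⁻¹ ≤ δ := by
      rw [inv_le_comm₀ (by positivity) hδ] at *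
      exact h1
    have : y ∈ Metric.thickening δ C := by
      rw [Metric.mem_thickening_iff]
      exact ⟨x, hx, by rw [dist_comm]; linarith⟩
    exact hy (hthick this)

private lemma KK_covers' (hΩ : IsOpen Ω) {x : Fin d → ℝ} (hx : x ∈ Ω) : ∃ n, x ∈ KK Ω n := by
  obtain ⟨n, hn⟩ := KK_covers hΩ isCompact_singleton (singleton_subset_iff.mpr hx)
  exact ⟨n, hn rfl⟩

noncomputable section Pairing
open Set
variable {d : ℕ} {Ω : Set (Fin d → ℝ)}

private lemma pairing_integrable (f : L2loc d Ω) (g : L2cpt d Ω) :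
    Integrable (fun x => (f : (Fin d → ℝ) →ₘ[volume.restrict Ω] ℂ) x *
      ((g : L2loc d Ω) : (Fin d → ℝ) →ₘ[volume.restrict Ω] ℂ) x) (volume.restrict Ω) := by
  obtain ⟨C, hC, hCΩ, h0⟩ := g.2
  set F : (Fin d → ℝ) → ℂ := ⇑(f : (Fin d → ℝ) →ₘ[volume.restrict Ω] ℂ) with hFdef
  set G : (Fin d → ℝ) → ℂ :=
    ⇑((g : L2loc d Ω) : (Fin d → ℝ) →ₘ[volume.restrict Ω] ℂ) with hGdef
  have hFm : AEStronglyMeasurable F ((volume.restrict Ω).restrict C) :=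
    (AEEqFun.aestronglyMeasurable _).restrict
  have hGm : AEStronglyMeasurable G ((volume.restrict Ω).restrict C) :=
    (AEEqFun.aestronglyMeasurable _).restrict
  have hFc : MemLp (fun x => (starRingEnd ℂ) (F x)) 2 ((volume.restrict Ω).restrict C) := by
    refine ⟨RCLike.continuous_conj.comp_aestronglyMeasurable hFm, ?_⟩
    rw [eLpNorm_congr_norm_ae (Filter.Eventually.of_forall fun x => RCLike.norm_conj (F x))]
    exact L2loc_spec f hC hCΩ
  have hG2 : MemLp G 2 ((volume.restrict Ω).restrict C) := ⟨hGm, L2loc_spec _ hC hCΩ⟩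
  have hint := L2.integrable_inner (𝕜 := ℂ) (hFc.toLp _) (hG2.toLp _)
  have h1 : IntegrableOn (fun x => F x * G x) C (volume.restrict Ω) := by
    refine hint.congr ?_
    filter_upwards [hFc.coeFn_toLp, hG2.coeFn_toLp] with x hfx hgx
    rw [RCLike.inner_apply', hfx, hgx]
    simp
  have h2 : Integrable (C.indicator fun x => F x * G x) (volume.restrict Ω) :=
    h1.integrable_indicator hC.measurableSet
  refine h2.congr ?_
  filter_upwards [h0] with x hx
  by_cases hxC : x ∈ C
  · rw [Set.indicator_of_mem hxC]
  · rw [Set.indicator_of_notMem hxC, hx hxC, mul_zero]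

private lemma pairing_add (f : L2loc d Ω) (g₁ g₂ : L2cpt d Ω) :
    ∫ x, (f : (Fin d → ℝ) →ₘ[volume.restrict Ω] ℂ) x *
      (((g₁ + g₂ : L2cpt d Ω) : L2loc d Ω) : (Fin d → ℝ) →ₘ[volume.restrict Ω] ℂ) x
        ∂(volume.restrict Ω)
    = (∫ x, (f : (Fin d → ℝ) →ₘ[volume.restrict Ω] ℂ) x *
        ((g₁ : L2loc d Ω) : (Fin d → ℝ) →ₘ[volume.restrict Ω] ℂ) x ∂(volume.restrict Ω))
    + ∫ x, (f : (Fin d → ℝ) →ₘ[volume.restrict Ω] ℂ) x *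
        ((g₂ : L2loc d Ω) : (Fin d → ℝ) →ₘ[volume.restrict Ω] ℂ) x ∂(volume.restrict Ω) := by
  rw [← integral_add (pairing_integrable f g₁) (pairing_integrable f g₂)]
  refine integral_congr_ae ?_
  have hcoe := AEEqFun.coeFn_add
    ((g₁ : L2loc d Ω) : (Fin d → ℝ) →ₘ[volume.restrict Ω] ℂ)
    ((g₂ : L2loc d Ω) : (Fin d → ℝ) →ₘ[volume.restrict Ω] ℂ)
  filter_upwards [hcoe] with x hx
  have : (((g₁ + g₂ : L2cpt d Ω) : L2loc d Ω) : (Fin d → ℝ) →ₘ[volume.restrict Ω] ℂ) x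
      = ((g₁ : L2loc d Ω) : (Fin d → ℝ) →ₘ[volume.restrict Ω] ℂ) x
      + ((g₂ : L2loc d Ω) : (Fin d → ℝ) →ₘ[volume.restrict Ω] ℂ) x := hx
  rw [this, mul_add]

private lemma pairing_smul (f : L2loc d Ω) (c : ℂ) (g : L2cpt d Ω) :
    ∫ x, (f : (Fin d → ℝ) →ₘ[volume.restrict Ω] ℂ) x *
      (((c • g : L2cpt d Ω) : L2loc d Ω) : (Fin d → ℝ) →ₘ[volume.restrict Ω] ℂ) x
        ∂(volume.restrict Ω)
    = c • ∫ x, (f : (Fin d → ℝ) →ₘ[volume.restrict Ω] ℂ) x *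
        ((g : L2loc d Ω) : (Fin d → ℝ) →ₘ[volume.restrict Ω] ℂ) x ∂(volume.restrict Ω) := by
  rw [← integral_smul]
  refine integral_congr_ae ?_
  have hcoe := AEEqFun.coeFn_smul c
    ((g : L2loc d Ω) : (Fin d → ℝ) →ₘ[volume.restrict Ω] ℂ)
  filter_upwards [hcoe] with x hx
  have : (((c • g : L2cpt d Ω) : L2loc d Ω) : (Fin d → ℝ) →ₘ[volume.restrict Ω] ℂ) x
      = c • ((g : L2loc d Ω) : (Fin d → ℝ) →ₘ[volume.restrict Ω] ℂ) x := hx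
  rw [this]
  simp only [smul_eq_mul]
  ring

private lemma pairing_bound (f : L2loc d Ω) {C : Set (Fin d → ℝ)} (hC : IsCompact C)
    (hCΩ : C ⊆ Ω) :
    ∃ M : ℝ, ∀ g : L2cpt d Ω,
      (∀ᵐ x ∂(volume.restrict Ω), x ∉ C →
        ((g : L2loc d Ω) : (Fin d → ℝ) →ₘ[volume.restrict Ω] ℂ) x = 0) →
      ‖∫ x, (f : (Fin d → ℝ) →ₘ[volume.restrict Ω] ℂ) x *
        ((g : L2loc d Ω) : (Fin d → ℝ) →ₘ[volume.restrict Ω] ℂ) x ∂(volume.restrict Ω)‖ ≤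
      M * (eLpNorm ((g : L2loc d Ω) : (Fin d → ℝ) →ₘ[volume.restrict Ω] ℂ) 2
        (volume.restrict Ω)).toReal := by
  refine ⟨(eLpNorm (f : (Fin d → ℝ) →ₘ[volume.restrict Ω] ℂ) 2
    ((volume.restrict Ω).restrict C)).toReal, fun g h0 => ?_⟩
  set F : (Fin d → ℝ) → ℂ := ⇑(f : (Fin d → ℝ) →ₘ[volume.restrict Ω] ℂ) with hFdef
  set G : (Fin d → ℝ) → ℂ :=
    ⇑((g : L2loc d Ω) : (Fin d → ℝ) →ₘ[volume.restrict Ω] ℂ) with hGdef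
  have hFm : AEStronglyMeasurable F ((volume.restrict Ω).restrict C) :=
    (AEEqFun.aestronglyMeasurable _).restrict
  have hGm : AEStronglyMeasurable G ((volume.restrict Ω).restrict C) :=
    (AEEqFun.aestronglyMeasurable _).restrict
  have hFc : MemLp (fun x => (starRingEnd ℂ) (F x)) 2 ((volume.restrict Ω).restrict C) := by
    refine ⟨RCLike.continuous_conj.comp_aestronglyMeasurable hFm, ?_⟩
    rw [eLpNorm_congr_norm_ae (Filter.Eventually.of_forall fun x => RCLike.norm_conj (F x))]
    exact L2loc_spec f hC hCΩ
  have hG2 : MemLp G 2 ((volume.restrict Ω).restrict C) := ⟨hGm, L2loc_spec _ hC hCΩ⟩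
  have hind : (fun x => F x * G x) =ᵐ[volume.restrict Ω]
      C.indicator (fun x => F x * G x) := by
    filter_upwards [h0] with x hx
    by_cases hxC : x ∈ C
    · rw [Set.indicator_of_mem hxC]
    · rw [Set.indicator_of_notMem hxC, hx hxC, mul_zero]
  rw [integral_congr_ae hind, integral_indicator hC.measurableSet]
  have hval : ∫ x, F x * G x ∂((volume.restrict Ω).restrict C)
      = inner ℂ (hFc.toLp _) (hG2.toLp _) := by
    rw [L2.inner_def]
    refine (integral_congr_ae ?_).symm
    filter_upwards [hFc.coeFn_toLp, hG2.coeFn_toLp] with x hfx hgx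
    rw [RCLike.inner_apply', hfx, hgx]
    simp
  rw [hval]
  calc ‖inner (𝕜 := ℂ) (hFc.toLp _) (hG2.toLp _)‖
      ≤ ‖hFc.toLp _‖ * ‖hG2.toLp _‖ := norm_inner_le_norm _ _
    _ ≤ _ := by
        rw [Lp.norm_def, Lp.norm_def, eLpNorm_congr_ae hFc.coeFn_toLp,
          eLpNorm_congr_ae hG2.coeFn_toLp,
          eLpNorm_congr_norm_ae (Filter.Eventually.of_forall fun x => RCLike.norm_conj (F x))]
        refine mul_le_mul_of_nonneg_left ?_ ENNReal.toReal_nonneg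
        exact ENNReal.toReal_mono (eLpNorm_lt_top_of_cpt g).ne
          (eLpNorm_mono_measure _ Measure.restrict_le_self)

end Pairing

noncomputable section Main
open Set
variable {d : ℕ} {Ω : Set (Fin d → ℝ)}

set_option maxHeartbeats 1000000 in
private lemma repr_unique (hΩ : IsOpen Ω) (f₁ f₂ : L2loc d Ω)
    (h : ∀ g : L2cpt d Ω,
      ∫ x, (f₁ : (Fin d → ℝ) →ₘ[volume.restrict Ω] ℂ) x *
        ((g : L2loc d Ω) : (Fin d → ℝ) →ₘ[volume.restrict Ω] ℂ) x ∂(volume.restrict Ω)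
      = ∫ x, (f₂ : (Fin d → ℝ) →ₘ[volume.restrict Ω] ℂ) x *
        ((g : L2loc d Ω) : (Fin d → ℝ) →ₘ[volume.restrict Ω] ℂ) x ∂(volume.restrict Ω)) :
    f₁ = f₂ := by
  set D : (Fin d → ℝ) → ℂ := fun x =>
    (f₁ : (Fin d → ℝ) →ₘ[volume.restrict Ω] ℂ) x -
    (f₂ : (Fin d → ℝ) →ₘ[volume.restrict Ω] ℂ) x with hDdef
  have hDm : AEStronglyMeasurable D (volume.restrict Ω) :=
    (AEEqFun.aestronglyMeasurable _).sub (AEEqFun.aestronglyMeasurable _)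
  have hDsub : ⇑((f₁ - f₂ : L2loc d Ω) : (Fin d → ℝ) →ₘ[volume.restrict Ω] ℂ)
      =ᵐ[volume.restrict Ω] D := by
    have := AEEqFun.coeFn_sub (f₁ : (Fin d → ℝ) →ₘ[volume.restrict Ω] ℂ)
      (f₂ : (Fin d → ℝ) →ₘ[volume.restrict Ω] ℂ)
    filter_upwards [this] with x hx
    exact hx
  have hzero : ∀ n : ℕ, ∀ᵐ x ∂(volume.restrict Ω), x ∈ KK Ω n → D x = 0 := by
    intro n
    set K := KK Ω n with hK
    have hKc : IsCompact K := KK_compact n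
    have hKΩ : K ⊆ Ω := KK_subset hΩ n
    have hDfin : eLpNorm D 2 ((volume.restrict Ω).restrict K) < ⊤ := by
      rw [← eLpNorm_congr_ae hDsub.restrict]
      exact L2loc_spec _ hKc hKΩ
    have hφm : AEStronglyMeasurable (K.indicator fun x => (starRingEnd ℂ) (D x))
        (volume.restrict Ω) :=
      (RCLike.continuous_conj.comp_aestronglyMeasurable hDm).indicator hKc.measurableSet
    have hφfin : eLpNorm (K.indicator fun x => (starRingEnd ℂ) (D x)) 2
        ((volume.restrict Ω).restrict K) < ⊤ := by
      refine lt_of_le_of_lt (eLpNorm_indicator_le _) ?_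
      rw [eLpNorm_congr_norm_ae (Filter.Eventually.of_forall fun x => RCLike.norm_conj (D x))]
      exact hDfin
    set g : L2cpt d Ω := mkCpt hφm hKc hKΩ (fun x hx => Set.indicator_of_notMem hx _) hφfin
      with hg
    have hgcoe : ⇑((g : L2loc d Ω) : (Fin d → ℝ) →ₘ[volume.restrict Ω] ℂ)
        =ᵐ[volume.restrict Ω] K.indicator fun x => (starRingEnd ℂ) (D x) := mkCpt_coeFn _ _ _ _ _
    -- ∫ D * g = 0
    have hsub0 : ∫ x, D x * ((g : L2loc d Ω) : (Fin d → ℝ) →ₘ[volume.restrict Ω] ℂ) x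
        ∂(volume.restrict Ω) = 0 := by
      have hi1 := pairing_integrable f₁ g
      have hi2 := pairing_integrable f₂ g
      have := integral_sub hi1 hi2
      rw [h g, sub_self] at this
      rw [← this]
      refine integral_congr_ae (Filter.Eventually.of_forall fun x => ?_)
      simp only [hDdef]
      ring
    -- rewrite as inner product over the restricted measure
    have hDK : MemLp D 2 ((volume.restrict Ω).restrict K) := ⟨hDm.restrict, hDfin⟩
    have hinner : (inner (𝕜 := ℂ) (hDK.toLp D) (hDK.toLp D)) = 0 := by
      rw [L2.inner_def]
      have : ∫ x, (inner (𝕜 := ℂ) ((hDK.toLp D) x) ((hDK.toLp D) x))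
          ∂((volume.restrict Ω).restrict K)
          = ∫ x, D x * ((g : L2loc d Ω) : (Fin d → ℝ) →ₘ[volume.restrict Ω] ℂ) x
            ∂(volume.restrict Ω) := by
        rw [show ∫ x, D x * ((g : L2loc d Ω) : (Fin d → ℝ) →ₘ[volume.restrict Ω] ℂ) x
            ∂(volume.restrict Ω)
          = ∫ x, K.indicator (fun y => D y * (starRingEnd ℂ) (D y)) x ∂(volume.restrict Ω) from
            integral_congr_ae (by
              filter_upwards [hgcoe] with x hx
              rw [hx]
              by_cases hxK : x ∈ K
              · rw [Set.indicator_of_mem hxK, Set.indicator_of_mem hxK]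
              · rw [Set.indicator_of_notMem hxK, Set.indicator_of_notMem hxK, mul_zero]),
          integral_indicator hKc.measurableSet]
        refine integral_congr_ae ?_
        filter_upwards [hDK.coeFn_toLp] with x hx
        rw [RCLike.inner_apply', hx]
        ring
      rw [this, hsub0]
    have hD0 : D =ᵐ[(volume.restrict Ω).restrict K] 0 := by
      have := inner_self_eq_zero.mp hinner
      calc D =ᵐ[(volume.restrict Ω).restrict K] ⇑(hDK.toLp D) := hDK.coeFn_toLp.symm
        _ =ᵐ[(volume.restrict Ω).restrict K] ⇑(0 : Lp ℂ 2 ((volume.restrict Ω).restrict K)) :=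
            by rw [this]
        _ =ᵐ[(volume.restrict Ω).restrict K] 0 := Lp.coeFn_zero _ _ _
    exact (ae_restrict_iff' hKc.measurableSet).mp hD0
  have hae : ∀ᵐ x ∂(volume.restrict Ω), D x = 0 := by
    have h1 : ∀ᵐ x ∂(volume.restrict Ω), ∀ n, x ∈ KK Ω n → D x = 0 := ae_all_iff.mpr hzero
    have h2 : ∀ᵐ x ∂(volume.restrict Ω), x ∈ Ω := ae_restrict_mem hΩ.measurableSet
    filter_upwards [h1, h2] with x h1x h2x
    obtain ⟨n, hn⟩ := KK_covers' hΩ h2x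
    exact h1x n hn
  apply Subtype.ext
  apply AEEqFun.ext
  filter_upwards [hae] with x hx
  exact sub_eq_zero.mp hx

end Main

noncomputable section Fwd
open Set
variable {d : ℕ} {Ω : Set (Fin d → ℝ)}

set_option maxHeartbeats 2000000 in
private lemma forward (hΩ : IsOpen Ω) (Λ : L2cpt d Ω →ₗ[ℂ] ℂ)
    (hΛ : ∀ C : Set (Fin d → ℝ), IsCompact C → C ⊆ Ω →
      ∃ M : ℝ, ∀ g : L2cpt d Ω,
        (∀ᵐ x ∂(volume.restrict Ω), x ∉ C →
          ((g : L2loc d Ω) : (Fin d → ℝ) →ₘ[volume.restrict Ω] ℂ) x = 0) →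
        ‖Λ g‖ ≤ M * (eLpNorm ((g : L2loc d Ω) : (Fin d → ℝ) →ₘ[volume.restrict Ω] ℂ) 2
          (volume.restrict Ω)).toReal) :
    ∃ f : L2loc d Ω, ∀ g : L2cpt d Ω,
      Λ g = ∫ x, (f : (Fin d → ℝ) →ₘ[volume.restrict Ω] ℂ) x *
        ((g : L2loc d Ω) : (Fin d → ℝ) →ₘ[volume.restrict Ω] ℂ) x ∂(volume.restrict Ω) := by
  have hrep : ∀ n : ℕ, ∃ v : Lp ℂ 2 (volume.restrict Ω), ∀ g : L2cpt d Ω,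
      (∀ᵐ x ∂(volume.restrict Ω), x ∉ KK Ω n →
        ((g : L2loc d Ω) : (Fin d → ℝ) →ₘ[volume.restrict Ω] ℂ) x = 0) →
      Λ g = ∫ x, (starRingEnd ℂ) (v x) *
        ((g : L2loc d Ω) : (Fin d → ℝ) →ₘ[volume.restrict Ω] ℂ) x ∂(volume.restrict Ω) :=
    fun n => exists_repr_on Λ (KK_compact n) (KK_subset hΩ n)
      (hΛ _ (KK_compact n) (KK_subset hΩ n))
  choose v hv using hrep
  -- consistency of the local representatives
  have hcons : ∀ m n : ℕ, m ≤ n →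
      ∀ᵐ x ∂(volume.restrict Ω), x ∈ KK Ω m → ⇑(v m) x = ⇑(v n) x := by
    intro m n hmn
    set K := KK Ω m with hK
    have hKc : IsCompact K := KK_compact m
    have hKΩ : K ⊆ Ω := KK_subset hΩ m
    set D : Lp ℂ 2 (volume.restrict Ω) := v m - v n with hD
    have hφm : AEStronglyMeasurable (K.indicator ⇑D) (volume.restrict Ω) :=
      (Lp.aestronglyMeasurable D).indicator hKc.measurableSet
    have hφfin : eLpNorm (K.indicator ⇑D) 2 ((volume.restrict Ω).restrict K) < ⊤ :=
      lt_of_le_of_lt (le_trans (eLpNorm_mono_measure _ Measure.restrict_le_self)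
        (eLpNorm_indicator_le _)) (Lp.eLpNorm_lt_top D)
    set g : L2cpt d Ω := mkCpt hφm hKc hKΩ (fun x hx => Set.indicator_of_notMem hx _) hφfin
      with hg
    have hgcoe : ⇑((g : L2loc d Ω) : (Fin d → ℝ) →ₘ[volume.restrict Ω] ℂ)
        =ᵐ[volume.restrict Ω] K.indicator ⇑D := mkCpt_coeFn _ _ _ _ _
    have hvan_m : ∀ᵐ x ∂(volume.restrict Ω), x ∉ K →
        ((g : L2loc d Ω) : (Fin d → ℝ) →ₘ[volume.restrict Ω] ℂ) x = 0 := by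
      filter_upwards [hgcoe] with x hx hxK
      rw [hx, Set.indicator_of_notMem hxK]
    have hvan_n : ∀ᵐ x ∂(volume.restrict Ω), x ∉ KK Ω n →
        ((g : L2loc d Ω) : (Fin d → ℝ) →ₘ[volume.restrict Ω] ℂ) x = 0 := by
      filter_upwards [hvan_m] with x hx hxn
      exact hx fun hxm => hxn (KK_mono hmn hxm)
    -- both expressions for Λ g, written as inner products against gL g
    have hIP : ∀ w : Lp ℂ 2 (volume.restrict Ω),
        ∫ x, (starRingEnd ℂ) (w x) *
          ((g : L2loc d Ω) : (Fin d → ℝ) →ₘ[volume.restrict Ω] ℂ) x ∂(volume.restrict Ω)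
        = inner (𝕜 := ℂ) w (gL g) := by
      intro w
      rw [L2.inner_def]
      refine (integral_congr_ae (Filter.Eventually.of_forall fun x => ?_)).symm
      rw [RCLike.inner_apply', gL_coe]
    have e1 : Λ g = inner (𝕜 := ℂ) (v m) (gL g) := by rw [hv m g hvan_m, hIP]
    have e2 : Λ g = inner (𝕜 := ℂ) (v n) (gL g) := by rw [hv n g hvan_n, hIP]
    have eD : inner (𝕜 := ℂ) D (gL g) = 0 := by
      rw [hD, inner_sub_left, ← e1, ← e2, sub_self]
    have horth : inner (𝕜 := ℂ) (D - gL g) (gL g) = 0 := by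
      rw [L2.inner_def]
      rw [show ∫ x, (inner (𝕜 := ℂ) ((D - gL g) x) ((gL g) x)) ∂(volume.restrict Ω)
          = ∫ x, (0 : ℂ) ∂(volume.restrict Ω) from integral_congr_ae ?_, integral_zero]
      filter_upwards [Lp.coeFn_sub D (gL g), hgcoe] with x hx hgx
      rw [RCLike.inner_apply', hx, Pi.sub_apply]
      have hgx' : ⇑(gL g) x = K.indicator ⇑D x := hgx
      rw [hgx']
      by_cases hxK : x ∈ K
      · rw [Set.indicator_of_mem hxK]; simp
      · rw [Set.indicator_of_notMem hxK]; simp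
    have hgL0 : gL g = 0 := by
      refine inner_self_eq_zero (𝕜 := ℂ) |>.mp ?_
      have h' := inner_sub_left (𝕜 := ℂ) D (gL g) (gL g)
      rw [horth, eD] at h'
      linear_combination h'
    have hind0 : K.indicator ⇑D =ᵐ[volume.restrict Ω] 0 := by
      calc K.indicator ⇑D =ᵐ[volume.restrict Ω]
          ⇑((g : L2loc d Ω) : (Fin d → ℝ) →ₘ[volume.restrict Ω] ℂ) := hgcoe.symm
        _ = ⇑(gL g) := (gL_coe g).symm
        _ =ᵐ[volume.restrict Ω] ⇑(0 : Lp ℂ 2 (volume.restrict Ω)) := by rw [hgL0]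
        _ =ᵐ[volume.restrict Ω] 0 := Lp.coeFn_zero _ _ _
    filter_upwards [hind0, Lp.coeFn_sub (v m) (v n)] with x hx hsx hxK
    have : K.indicator ⇑D x = 0 := hx
    rw [Set.indicator_of_mem hxK] at this
    have : ⇑(v m) x - ⇑(v n) x = 0 := by
      have h' := hsx
      rw [Pi.sub_apply] at h'
      rw [← h']; exact this
    exact sub_eq_zero.mp this
  -- strongly measurable representatives
  set ψ : ℕ → (Fin d → ℝ) → ℂ := fun n => (Lp.aestronglyMeasurable (v n)).mk _ with hψdef
  have hψm : ∀ n, StronglyMeasurable (ψ n) :=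
    fun n => (Lp.aestronglyMeasurable (v n)).stronglyMeasurable_mk
  have hψae : ∀ n, ⇑(v n) =ᵐ[volume.restrict Ω] ψ n :=
    fun n => (Lp.aestronglyMeasurable (v n)).ae_eq_mk
  letI dec : ∀ n : ℕ, DecidablePred (fun x : Fin d → ℝ => x ∈ KK Ω n ∪ (⋃ m, KK Ω m)ᶜ) :=
    fun n x => Classical.propDecidable _
  have hex : ∀ x : Fin d → ℝ, ∃ n, x ∈ KK Ω n ∪ (⋃ m, KK Ω m)ᶜ := by
    intro x
    by_cases hx : x ∈ ⋃ m, KK Ω m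
    · obtain ⟨m, hm⟩ := mem_iUnion.mp hx
      exact ⟨m, Or.inl hm⟩
    · exact ⟨0, Or.inr hx⟩
  set F : (Fin d → ℝ) → ℂ := fun x => (starRingEnd ℂ) (ψ (Nat.find (hex x)) x) with hFdef
  have hFm : Measurable F := by
    have := Measurable.find (f := fun n x => (starRingEnd ℂ) (ψ n x))
      (p := fun n x => x ∈ KK Ω n ∪ (⋃ m, KK Ω m)ᶜ)
      (fun n => RCLike.continuous_conj.measurable.comp (hψm n).measurable)
      (fun n => ((KK_compact n).measurableSet.union
        (MeasurableSet.iUnion fun m => (KK_compact (Ω := Ω) m).measurableSet).compl)) hex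
    rw [hFdef]
    exact this
  have hFsm : AEStronglyMeasurable F (volume.restrict Ω) := hFm.aestronglyMeasurable
  have keyF : ∀ n, ∀ᵐ x ∂(volume.restrict Ω), x ∈ KK Ω n →
      F x = (starRingEnd ℂ) (⇑(v n) x) := by
    intro n
    have hA : ∀ᵐ x ∂(volume.restrict Ω),
        ∀ m k : ℕ, m ≤ k → (x ∈ KK Ω m → ⇑(v m) x = ⇑(v k) x) := by
      rw [ae_all_iff]
      intro m
      rw [ae_all_iff]
      intro k
      by_cases hmk : m ≤ k
      · filter_upwards [hcons m k hmk] with x hx _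
        exact hx
      · exact Filter.Eventually.of_forall fun x h => absurd h hmk
    have hB : ∀ᵐ x ∂(volume.restrict Ω), ∀ m, ⇑(v m) x = ψ m x := ae_all_iff.mpr hψae
    filter_upwards [hA, hB] with x hAx hBx hxn
    rcases Nat.find_spec (hex x) with hj1 | hj2
    · have hψv : ψ (Nat.find (hex x)) x = ⇑(v n) x := by
        rcases le_total (Nat.find (hex x)) n with hle | hle
        · rw [← hBx]; exact hAx _ n hle hj1
        · rw [← hBx]; exact (hAx n _ hle hxn).symm
      rw [hFdef]
      simp only []
      rw [hψv]
    · exact absurd (mem_iUnion.mpr ⟨n, hxn⟩) hj2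
  have hFmem : AEEqFun.mk F hFsm ∈ L2loc d Ω := by
    intro C hC hCΩ
    obtain ⟨n, hCn⟩ := KK_covers hΩ hC hCΩ
    calc eLpNorm (⇑(AEEqFun.mk F hFsm)) 2 ((volume.restrict Ω).restrict C)
        = eLpNorm F 2 ((volume.restrict Ω).restrict C) :=
          eLpNorm_congr_ae (AEEqFun.coeFn_mk F hFsm).restrict
      _ ≤ eLpNorm F 2 ((volume.restrict Ω).restrict (KK Ω n)) :=
          eLpNorm_mono_measure _ (Measure.restrict_mono hCn le_rfl)
      _ = eLpNorm (fun x => (starRingEnd ℂ) (⇑(v n) x)) 2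
            ((volume.restrict Ω).restrict (KK Ω n)) :=
          eLpNorm_congr_ae ((ae_restrict_iff' (KK_compact n).measurableSet).mpr (keyF n))
      _ = eLpNorm (⇑(v n)) 2 ((volume.restrict Ω).restrict (KK Ω n)) :=
          eLpNorm_congr_norm_ae (Filter.Eventually.of_forall fun x => RCLike.norm_conj _)
      _ ≤ eLpNorm (⇑(v n)) 2 (volume.restrict Ω) :=
          eLpNorm_mono_measure _ Measure.restrict_le_self
      _ < ⊤ := Lp.eLpNorm_lt_top (v n)
  refine ⟨⟨AEEqFun.mk F hFsm, hFmem⟩, fun g => ?_⟩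
  obtain ⟨C, hC, hCΩ, h0⟩ := g.2
  obtain ⟨n, hCn⟩ := KK_covers hΩ hC hCΩ
  have hvan : ∀ᵐ x ∂(volume.restrict Ω), x ∉ KK Ω n →
      ((g : L2loc d Ω) : (Fin d → ℝ) →ₘ[volume.restrict Ω] ℂ) x = 0 := by
    filter_upwards [h0] with x hx hxn
    exact hx fun hc => hxn (hCn hc)
  rw [hv n g hvan]
  refine integral_congr_ae ?_
  filter_upwards [AEEqFun.coeFn_mk F hFsm, keyF n, hvan] with x h1 h2 h3
  by_cases hxn : x ∈ KK Ω n
  · rw [h1, h2 hxn]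
  · rw [h3 hxn, mul_zero, mul_zero]

end Fwd

set_option maxHeartbeats 1000000 in
/-- **`L²_loc(Ω)` is the topological dual of `L²_cpt(Ω)`** (the paper's Theorem 2.9, second
half, scalar case): a linear functional `Λ` on `L²_cpt(Ω)` whose restriction to each
`L²_K(Ω)` (elements with essential support in a fixed compact `K ⊆ Ω`) is continuous for
the `L²`-norm — i.e. `Λ` is continuous for the locally convex inductive limit (LF) topology
— is represented by a unique `f ∈ L²_loc(Ω)` via `Λ(g) = ∫ f·g dλ`; conversely every
`f ∈ L²_loc(Ω)` defines such a functional. -/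
theorem L2loc_dual_of_L2cpt (d : ℕ) (Ω : Set (Fin d → ℝ)) (hΩ : IsOpen Ω) (hne : Ω.Nonempty) :
    (∀ Λ : L2cpt d Ω →ₗ[ℂ] ℂ,
      (∀ C : Set (Fin d → ℝ), IsCompact C → C ⊆ Ω →
        ∃ M : ℝ, ∀ g : L2cpt d Ω,
          (∀ᵐ x ∂(volume.restrict Ω), x ∉ C →
            ((g : L2loc d Ω) : (Fin d → ℝ) →ₘ[volume.restrict Ω] ℂ) x = 0) →
          ‖Λ g‖ ≤ M * (eLpNorm ((g : L2loc d Ω) : (Fin d → ℝ) →ₘ[volume.restrict Ω] ℂ) 2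
            (volume.restrict Ω)).toReal) →
      ∃! f : L2loc d Ω, ∀ g : L2cpt d Ω,
        Λ g = ∫ x, (f : (Fin d → ℝ) →ₘ[volume.restrict Ω] ℂ) x *
          ((g : L2loc d Ω) : (Fin d → ℝ) →ₘ[volume.restrict Ω] ℂ) x ∂(volume.restrict Ω)) ∧
    (∀ f : L2loc d Ω,
      IsLinearMap ℂ (fun g : L2cpt d Ω =>
        ∫ x, (f : (Fin d → ℝ) →ₘ[volume.restrict Ω] ℂ) x *
          ((g : L2loc d Ω) : (Fin d → ℝ) →ₘ[volume.restrict Ω] ℂ) x ∂(volume.restrict Ω)) ∧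
      ∀ C : Set (Fin d → ℝ), IsCompact C → C ⊆ Ω →
        ∃ M : ℝ, ∀ g : L2cpt d Ω,
          (∀ᵐ x ∂(volume.restrict Ω), x ∉ C →
            ((g : L2loc d Ω) : (Fin d → ℝ) →ₘ[volume.restrict Ω] ℂ) x = 0) →
          ‖∫ x, (f : (Fin d → ℝ) →ₘ[volume.restrict Ω] ℂ) x *
            ((g : L2loc d Ω) : (Fin d → ℝ) →ₘ[volume.restrict Ω] ℂ) x ∂(volume.restrict Ω)‖ ≤
          M * (eLpNorm ((g : L2loc d Ω) : (Fin d → ℝ) →ₘ[volume.restrict Ω] ℂ) 2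
            (volume.restrict Ω)).toReal) := by
  constructor
  · intro Λ hΛ
    obtain ⟨f, hf⟩ := forward hΩ Λ hΛ
    refine ⟨f, hf, fun f' hf' => ?_⟩
    exact repr_unique hΩ f' f fun g => (hf' g).symm.trans (hf g)
  · intro f
    exact ⟨⟨fun g₁ g₂ => pairing_add f g₁ g₂, fun c g => pairing_smul f c g⟩,
      fun C hC hCΩ => pairing_bound f hC hCΩ⟩
end

section
/- Let Ω be a nonempty open subset of ℝ^d and equip E = L²_loc(Ω) with the topology of L²-convergence on compact subsets. Then E is reflexive: the canonical evaluation map J : E → (E →L ℂ) →L ℂ, J(f)(Λ) = Λ(f), where each space of continuous linear maps carries the topology of uniform convergence on (von Neumann) bounded sets, is a linear bijection that is a homeomorphism onto the strong bidual. -/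
open MeasureTheory

set_option maxHeartbeats 1000000
set_option synthInstance.maxHeartbeats 400000

section AbstractPart
open MeasureTheory Bornology Filter Topology Metric

noncomputable section AbstractReflexive

variable {E : Type*} [AddCommGroup E] [Module ℂ E]
  {H : ℕ → Type*} [∀ j, NormedAddCommGroup (H j)] [∀ j, InnerProductSpace ℂ (H j)]
  [∀ j, CompleteSpace (H j)]

theorem abstract_reflexive [t : TopologicalSpace E]
    {p : SeminormFamily ℂ E ℕ} (hp : WithSeminorms p)
    (hmono : ∀ ⦃i j : ℕ⦄, i ≤ j → ∀ f, p i f ≤ p j f)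
    (R : ∀ j, E →ₗ[ℂ] H j) (hR : ∀ j f, ‖R j f‖ = p j f)
    (sec : ∀ j, H j →ₗ[ℂ] E) (hsec : ∀ j g, R j (sec j g) = g)
    (r : ∀ j, H (j + 1) →ₗ[ℂ] H j) (hrR : ∀ j f, r j (R (j + 1) f) = R j f)
    (glue : ∀ g : ∀ j, H j, (∀ j, r j (g (j + 1)) = g j) → ∃ f, ∀ j, R j f = g j)
    (hsep : ∀ f : E, (∀ j, p j f = 0) → f = 0) :
    ∃ J : E ≃L[ℂ] ((E →L[ℂ] ℂ) →L[ℂ] ℂ), ∀ f Λ, J f Λ = Λ f := by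
  haveI : IsTopologicalAddGroup E := hp.topologicalAddGroup
  haveI : ContinuousSMul ℂ E := hp.continuousSMul
  haveI hg1 : IsTopologicalAddGroup (E →L[ℂ] ℂ) := inferInstance
  haveI : ContinuousAdd (E →L[ℂ] ℂ) := hg1.toContinuousAdd
  haveI hg2 : IsTopologicalAddGroup ((E →L[ℂ] ℂ) →L[ℂ] ℂ) := inferInstance
  haveI : ContinuousAdd ((E →L[ℂ] ℂ) →L[ℂ] ℂ) := hg2.toContinuousAdd
  -- `R j` as a continuous linear map
  have hRcont : ∀ j, Continuous (R j) := by
    intro j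
    refine Seminorm.cont_withSeminorms_normedSpace (H j) hp (R j) ⟨{j}, 1, ?_⟩
    intro f
    simp only [Seminorm.comp_apply, coe_normSeminorm, one_smul, Finset.sup_singleton]
    exact le_of_eq (hR j f)
  let RL : ∀ j, E →L[ℂ] H j := fun j => ⟨R j, hRcont j⟩
  have hRL : ∀ j f, RL j f = R j f := fun j f => rfl
  -- `r j` as a continuous linear map
  have hrbound : ∀ j (g : H (j + 1)), ‖r j g‖ ≤ 1 * ‖g‖ := by
    intro j g
    rw [one_mul]
    calc ‖r j g‖ = ‖r j (R (j+1) (sec (j+1) g))‖ := by rw [hsec]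
      _ = ‖R j (sec (j+1) g)‖ := by rw [hrR]
      _ = p j (sec (j+1) g) := hR _ _
      _ ≤ p (j+1) (sec (j+1) g) := hmono (Nat.le_succ j) _
      _ = ‖R (j+1) (sec (j+1) g)‖ := (hR _ _).symm
      _ = ‖g‖ := by rw [hsec]
  let rL : ∀ j, H (j + 1) →L[ℂ] H j := fun j => (r j).mkContinuous 1 (hrbound j)
  have hrL : ∀ j g, rL j g = r j g := fun j g => rfl
  -- the fundamental bound for continuous functionals
  have hbound : ∀ Λ : E →L[ℂ] ℂ, ∃ j, ∃ C : ℝ, 0 < C ∧ ∀ f, ‖Λ f‖ ≤ C * p j f := by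
    intro Λ
    have hq : Continuous ((normSeminorm ℂ ℂ).comp (Λ : E →ₗ[ℂ] ℂ)) := by
      exact (continuous_norm.comp Λ.continuous : Continuous fun f => ‖Λ f‖)
    obtain ⟨s, C, hC, hle⟩ := Seminorm.bound_of_continuous hp _ hq
    refine ⟨s.sup id, C, by positivity, fun f => ?_⟩
    have h1 : ‖Λ f‖ ≤ C * (s.sup p) f := by
      have := hle f
      simpa [NNReal.smul_def, smul_eq_mul] using this
    refine h1.trans (mul_le_mul_of_nonneg_left ?_ (by positivity))
    refine Seminorm.finset_sup_apply_le (by positivity) fun i hi => ?_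
    exact hmono (Finset.le_sup (f := id) hi) f
  -- every continuous functional factors through some `H j`
  have hrep : ∀ Λ : E →L[ℂ] ℂ, ∃ j, ∃ ℓ : H j →L[ℂ] ℂ, ∀ f, Λ f = ℓ (R j f) := by
    intro Λ
    obtain ⟨j, C, hC, hΛ⟩ := hbound Λ
    have hker : ∀ f : E, p j f = 0 → Λ f = 0 := by
      intro f hf
      have := hΛ f
      rw [hf, mul_zero] at this
      exact norm_le_zero_iff.mp this
    refine ⟨j, LinearMap.mkContinuous ((Λ : E →ₗ[ℂ] ℂ).comp (sec j)) C ?_, fun f => ?_⟩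
    · intro g
      simp only [LinearMap.coe_comp, Function.comp_apply, ContinuousLinearMap.coe_coe]
      calc ‖Λ (sec j g)‖ ≤ C * p j (sec j g) := hΛ _
        _ = C * ‖R j (sec j g)‖ := by rw [hR]
        _ = C * ‖g‖ := by rw [hsec]
    · simp only [LinearMap.mkContinuous_apply, LinearMap.coe_comp, Function.comp_apply,
        ContinuousLinearMap.coe_coe]
      have h0 : p j (f - sec j (R j f)) = 0 := by
        rw [← hR j, map_sub, hsec, sub_self, norm_zero]
      have := hker _ h0
      rw [map_sub] at this
      exact sub_eq_zero.mp this
  -- evaluation at `f` is continuous on the strong dual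
  have hevalcont : ∀ f : E, Continuous fun Λ : E →L[ℂ] ℂ => Λ f := by
    intro f
    let ev : (E →L[ℂ] ℂ) →+ ℂ :=
      { toFun := fun Λ => Λ f, map_zero' := rfl, map_add' := fun _ _ => rfl }
    have h0 : ev 0 = 0 := rfl
    refine continuous_of_continuousAt_zero ev ?_
    rw [ContinuousAt, h0]
    intro V hV
    refine mem_map.mpr (mem_of_superset
      (ContinuousLinearMap.hasBasis_nhds_zero.mem_of_mem (i := ({f}, V))
        ⟨isVonNBounded_singleton f, hV⟩) ?_)
    intro Λ hΛ
    exact hΛ f rfl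
  let evlin : E → ((E →L[ℂ] ℂ) →ₗ[ℂ] ℂ) := fun f =>
    { toFun := fun Λ => Λ f
      map_add' := fun _ _ => rfl
      map_smul' := fun _ _ => rfl }
  let Jlin : E →ₗ[ℂ] ((E →L[ℂ] ℂ) →L[ℂ] ℂ) :=
    { toFun := fun f => { toLinearMap := evlin f, cont := hevalcont f }
      map_add' := fun f g => by ext Λ; exact map_add Λ f g
      map_smul' := fun c f => by ext Λ; exact map_smul Λ c f }
  have hJlin : ∀ (f : E) (Λ : E →L[ℂ] ℂ), Jlin f Λ = Λ f := fun f Λ => rfl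
  -- injectivity
  have hinj : Function.Injective Jlin := by
    rw [injective_iff_map_eq_zero]
    intro f hf
    refine hsep f fun j => ?_
    have h1 : ((innerSL ℂ (R j f)).comp (RL j)) f = 0 := by
      have h2 := congrArg (fun Φ => Φ ((innerSL ℂ (R j f)).comp (RL j))) hf
      simpa [hJlin] using h2
    have h2 : R j f = 0 := by
      simpa [hRL] using h1
    rw [← hR j f, h2, norm_zero]
  -- uniform boundedness for strongly bounded sets of functionals
  have hunif : ∀ B' : Set (E →L[ℂ] ℂ), IsVonNBounded ℂ B' →
      ∃ j, ∃ C : ℝ, 0 < C ∧ ∀ Λ ∈ B', ∀ x, ‖Λ x‖ ≤ C * p j x := by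
    intro B' hB'
    by_contra hcon
    push_neg at hcon
    have hcon' : ∀ n : ℕ, ∃ Λ, Λ ∈ B' ∧ ∃ x, ((n : ℝ) + 1) ^ 2 * p n x < ‖Λ x‖ := by
      intro n
      obtain ⟨Λ, hΛ, x, hx⟩ := hcon n (((n : ℝ) + 1) ^ 2) (by positivity)
      exact ⟨Λ, hΛ, x, hx⟩
    choose Λs hΛmem xs hxs using hcon'
    have hpos : ∀ n, 0 < ‖Λs n (xs n)‖ :=
      fun n => lt_of_le_of_lt (by positivity) (hxs n)
    set y : ℕ → E := fun n => ((((n : ℝ) + 1) / ‖Λs n (xs n)‖ : ℝ) : ℂ) • xs n with hy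
    have hΛy : ∀ n, ‖Λs n (y n)‖ = (n : ℝ) + 1 := by
      intro n
      have h1 : (Λs n) (y n)
          = ((((n : ℝ) + 1) / ‖Λs n (xs n)‖ : ℝ) : ℂ) * Λs n (xs n) := by
        rw [hy]; simp
      rw [h1, norm_mul, Complex.norm_real, Real.norm_eq_abs,
        abs_of_nonneg (by positivity), div_mul_cancel₀ _ (hpos n).ne']
    have hpy : ∀ k n, k ≤ n → p k (y n) ≤ 1 := by
      intro k n hkn
      have h1 : p n (y n) = (((n : ℝ) + 1) / ‖Λs n (xs n)‖) * p n (xs n) := by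
        rw [hy]
        rw [map_smul_eq_mul, Complex.norm_real, Real.norm_eq_abs,
          abs_of_nonneg (by positivity)]
      have h2 : p n (xs n) ≤ ‖Λs n (xs n)‖ / ((n : ℝ) + 1) ^ 2 := by
        rw [le_div_iff₀ (by positivity)]
        nlinarith [hxs n]
      calc p k (y n) ≤ p n (y n) := hmono hkn _
        _ = (((n : ℝ) + 1) / ‖Λs n (xs n)‖) * p n (xs n) := h1
        _ ≤ (((n : ℝ) + 1) / ‖Λs n (xs n)‖) * (‖Λs n (xs n)‖ / ((n : ℝ) + 1) ^ 2) := by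
            exact mul_le_mul_of_nonneg_left h2 (by positivity)
        _ = 1 / ((n : ℝ) + 1) := by
            rw [div_mul_div_comm,
              div_eq_div_iff (ne_of_gt (mul_pos (hpos n) (by positivity))) (by positivity)]
            ring
        _ ≤ 1 := by
            rw [div_le_one (by positivity)]
            linarith [Nat.cast_nonneg (α := ℝ) n]
    have hbdd : IsVonNBounded ℂ (Set.range y) := by
      rw [hp.isVonNBounded_iff_seminorm_bounded]
      intro k
      have hsnn : (0 : ℝ) ≤ ∑ m ∈ Finset.range k, p k (y m) :=
        Finset.sum_nonneg fun m _ => apply_nonneg _ _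
      refine ⟨(∑ n ∈ Finset.range k, p k (y n)) + 2, by linarith, ?_⟩
      rintro _ ⟨n, rfl⟩
      rcases lt_or_ge n k with h | h
      · have h1 : p k (y n) ≤ ∑ m ∈ Finset.range k, p k (y m) :=
          Finset.single_le_sum (fun m _ => apply_nonneg _ _) (Finset.mem_range.mpr h)
        linarith
      · have h1 := hpy k n h
        have h2 : (0 : ℝ) ≤ ∑ m ∈ Finset.range k, p k (y m) :=
          Finset.sum_nonneg fun m _ => apply_nonneg _ _
        linarith
    have hU : {Λ : E →L[ℂ] ℂ | ∀ x ∈ Set.range y, Λ x ∈ closedBall (0 : ℂ) 1}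
        ∈ 𝓝 (0 : E →L[ℂ] ℂ) :=
      ContinuousLinearMap.hasBasis_nhds_zero.mem_of_mem
        (i := (Set.range y, closedBall 0 1)) ⟨hbdd, closedBall_mem_nhds 0 one_pos⟩
    obtain ⟨a, ha⟩ := absorbs_iff_norm.mp (hB' hU)
    set c : ℂ := ((max a 1 : ℝ) : ℂ) with hc
    have hcnorm : ‖c‖ = max a 1 := by
      rw [hc, Complex.norm_real, Real.norm_eq_abs,
        abs_of_nonneg (le_trans zero_le_one (le_max_right a 1))]
    have hc1 : (1 : ℝ) ≤ ‖c‖ := by rw [hcnorm]; exact le_max_right a 1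
    have hc0 : c ≠ 0 := by
      intro h; rw [h, norm_zero] at hc1; linarith
    have hsub := ha c (by rw [hcnorm]; exact le_max_left a 1)
    have hMbound : ∀ Λ ∈ B', ∀ n : ℕ, ‖Λ (y n)‖ ≤ ‖c‖ := by
      intro Λ hΛ n
      have h1 := hsub hΛ
      rw [Set.mem_smul_set_iff_inv_smul_mem₀ hc0] at h1
      have h2 := h1 (y n) ⟨n, rfl⟩
      rw [mem_closedBall_zero_iff] at h2
      have h3 : (c⁻¹ • Λ) (y n) = c⁻¹ * Λ (y n) := rfl
      rw [h3, norm_mul, norm_inv] at h2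
      have hcpos : (0 : ℝ) < ‖c‖ := lt_of_lt_of_le one_pos hc1
      calc ‖Λ (y n)‖ = ‖c‖ * (‖c‖⁻¹ * ‖Λ (y n)‖) := by
            rw [← mul_assoc, mul_inv_cancel₀ hcpos.ne', one_mul]
        _ ≤ ‖c‖ * 1 := mul_le_mul_of_nonneg_left h2 (norm_nonneg c)
        _ = ‖c‖ := mul_one _
    obtain ⟨m, hm⟩ := exists_nat_gt ‖c‖
    have hfin := hMbound (Λs m) (hΛmem m) m
    rw [hΛy m] at hfin
    have : (m : ℝ) < (m : ℝ) + 1 := by linarith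
    linarith
  -- continuity of `Jlin`
  have hJcont : Continuous Jlin := by
    refine continuous_of_continuousAt_zero Jlin.toAddMonoidHom ?_
    show Tendsto (⇑Jlin) (𝓝 0) (𝓝 (Jlin 0))
    rw [map_zero Jlin]
    intro W hW
    obtain ⟨⟨B', V⟩, ⟨hB', hV⟩, hWsub⟩ :=
      ContinuousLinearMap.hasBasis_nhds_zero.mem_iff.mp hW
    obtain ⟨ε, hε, hball⟩ := Metric.mem_nhds_iff.mp hV
    obtain ⟨j, C, hC, hCb⟩ := hunif B' hB'
    have hUopen : IsOpen {x : E | p j x < ε / C} :=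
      isOpen_Iio.preimage (hp.continuous_seminorm j)
    have hUmem : {x : E | p j x < ε / C} ∈ 𝓝 (0 : E) := by
      refine hUopen.mem_nhds ?_
      show p j 0 < ε / C
      rw [map_zero]
      positivity
    refine mem_map.mpr (mem_of_superset hUmem ?_)
    intro x hx
    apply hWsub
    intro Λ hΛ
    apply hball
    rw [mem_ball_zero_iff]
    calc ‖Λ x‖ ≤ C * p j x := hCb Λ hΛ x
      _ < C * (ε / C) := mul_lt_mul_of_pos_left hx hC
      _ = ε := by field_simp
  -- surjectivity
  have hsurj : Function.Surjective Jlin := by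
    intro Φ
    have hΦmem : Φ ⁻¹' closedBall (0 : ℂ) 1 ∈ 𝓝 (0 : E →L[ℂ] ℂ) := by
      have h1 := Φ.continuous.continuousAt (x := 0)
      rw [ContinuousAt, map_zero] at h1
      exact h1 (closedBall_mem_nhds 0 one_pos)
    obtain ⟨⟨B, V⟩, ⟨hB, hV⟩, hsubΦ⟩ :=
      ContinuousLinearMap.hasBasis_nhds_zero.mem_iff.mp hΦmem
    obtain ⟨ε, hε, hball⟩ := Metric.mem_nhds_iff.mp hV
    have hΦbound : ∀ (Λ : E →L[ℂ] ℂ) (M : ℝ), 0 < M → (∀ f ∈ B, ‖Λ f‖ ≤ M) →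
        ‖Φ Λ‖ ≤ 2 / ε * M := by
      intro Λ M hM hΛM
      have h1 : ((ε / (2 * M) : ℝ) : ℂ) • Λ ∈ {Λ : E →L[ℂ] ℂ | ∀ x ∈ B, Λ x ∈ V} := by
        intro x hx
        apply hball
        rw [mem_ball_zero_iff]
        have e1 : ((((ε / (2 * M) : ℝ)) : ℂ) • Λ) x = ((ε / (2 * M) : ℝ) : ℂ) * Λ x := rfl
        rw [e1, norm_mul, Complex.norm_real, Real.norm_eq_abs, abs_of_nonneg (by positivity)]
        calc ε / (2 * M) * ‖Λ x‖ ≤ ε / (2 * M) * M :=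
              mul_le_mul_of_nonneg_left (hΛM x hx) (by positivity)
          _ = ε / 2 := by field_simp
          _ < ε := by linarith
      have h2 := hsubΦ h1
      rw [Set.mem_preimage, _root_.map_smul, mem_closedBall_zero_iff] at h2
      rw [smul_eq_mul, norm_mul, Complex.norm_real, Real.norm_eq_abs,
        abs_of_nonneg (by positivity)] at h2
      have h3 : ε / (2 * M) * ‖Φ Λ‖ * (2 * M) ≤ 1 * (2 * M) :=
        mul_le_mul_of_nonneg_right h2 (by positivity)
      have h4 : ε / (2 * M) * ‖Φ Λ‖ * (2 * M) = ε * ‖Φ Λ‖ := by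
        field_simp
      rw [h4, one_mul] at h3
      rw [div_mul_eq_mul_div, le_div_iff₀ hε]
      linarith
    have hBp : ∀ j : ℕ, ∃ rj : ℝ, 0 < rj ∧ ∀ f ∈ B, p j f ≤ rj := by
      intro j
      obtain ⟨rr, hrrpos, hrr⟩ := hp.isVonNBounded_iff_seminorm_bounded.mp hB j
      exact ⟨max rr 1, lt_of_lt_of_le one_pos (le_max_right rr 1),
        fun f hf => le_trans (hrr f hf).le (le_max_left rr 1)⟩
    choose rj hrjpos hrjB using hBp
    have hψbound : ∀ (j : ℕ) (ℓ : H j →L[ℂ] ℂ),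
        ‖Φ (ℓ.comp (RL j))‖ ≤ (2 / ε * rj j) * ‖ℓ‖ := by
      intro j ℓ
      rcases eq_or_ne ℓ 0 with h | h
      · simp [h]
      · have hℓ : 0 < ‖ℓ‖ := norm_pos_iff.mpr h
        have hb : ∀ f ∈ B, ‖(ℓ.comp (RL j)) f‖ ≤ ‖ℓ‖ * rj j := by
          intro f hf
          calc ‖ℓ (RL j f)‖ ≤ ‖ℓ‖ * ‖RL j f‖ := ℓ.le_opNorm _
            _ = ‖ℓ‖ * p j f := by rw [hRL, hR]
            _ ≤ ‖ℓ‖ * rj j := mul_le_mul_of_nonneg_left (hrjB j f hf) hℓ.le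
        have h1 := hΦbound (ℓ.comp (RL j)) (‖ℓ‖ * rj j) (mul_pos hℓ (hrjpos j)) hb
        calc ‖Φ (ℓ.comp (RL j))‖ ≤ 2 / ε * (‖ℓ‖ * rj j) := h1
          _ = (2 / ε * rj j) * ‖ℓ‖ := by ring
    let ψlin : ∀ j, (H j →L[ℂ] ℂ) →ₗ[ℂ] ℂ := fun j =>
      { toFun := fun ℓ => Φ (ℓ.comp (RL j))
        map_add' := fun ℓ₁ ℓ₂ => by
          show Φ ((ℓ₁ + ℓ₂).comp (RL j)) = Φ (ℓ₁.comp (RL j)) + Φ (ℓ₂.comp (RL j))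
          rw [ContinuousLinearMap.add_comp, map_add]
        map_smul' := fun a ℓ => by
          show Φ ((a • ℓ).comp (RL j)) = a • Φ (ℓ.comp (RL j))
          rw [ContinuousLinearMap.smul_comp, _root_.map_smul] }
    let ψ : ∀ j, (H j →L[ℂ] ℂ) →L[ℂ] ℂ := fun j =>
      LinearMap.mkContinuous (ψlin j) (2 / ε * rj j) (hψbound j)
    have hψ : ∀ j ℓ, ψ j ℓ = Φ (ℓ.comp (RL j)) := fun j ℓ => rfl
    -- Riesz representation, twice
    have hggex : ∀ j, ∃ gg : H j, ∀ ℓ : H j →L[ℂ] ℂ, ψ j ℓ = ℓ gg := by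
      intro j
      let φlin : H j →ₗ[ℂ] ℂ :=
        { toFun := fun v => (starRingEnd ℂ) (ψ j (InnerProductSpace.toDual ℂ (H j) v))
          map_add' := fun v w => by
            show (starRingEnd ℂ) (ψ j (InnerProductSpace.toDual ℂ (H j) (v + w))) = _
            rw [map_add, map_add, map_add]
          map_smul' := fun a v => by
            show (starRingEnd ℂ) (ψ j (InnerProductSpace.toDual ℂ (H j) (a • v)))
              = a • (starRingEnd ℂ) (ψ j (InnerProductSpace.toDual ℂ (H j) v))
            rw [LinearIsometryEquiv.map_smulₛₗ, map_smulₛₗ]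
            simp [mul_comm] }
      have hφb : ∀ v, ‖φlin v‖ ≤ ‖ψ j‖ * ‖v‖ := by
        intro v
        have e1 : ‖φlin v‖ = ‖ψ j (InnerProductSpace.toDual ℂ (H j) v)‖ :=
          RCLike.norm_conj _
        rw [e1]
        calc ‖ψ j (InnerProductSpace.toDual ℂ (H j) v)‖
            ≤ ‖ψ j‖ * ‖InnerProductSpace.toDual ℂ (H j) v‖ := (ψ j).le_opNorm _
          _ = ‖ψ j‖ * ‖v‖ := by rw [LinearIsometryEquiv.norm_map]
      let φ : H j →L[ℂ] ℂ := LinearMap.mkContinuous φlin ‖ψ j‖ hφb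
      refine ⟨(InnerProductSpace.toDual ℂ (H j)).symm φ, fun ℓ => ?_⟩
      have hvℓ : InnerProductSpace.toDual ℂ (H j)
          ((InnerProductSpace.toDual ℂ (H j)).symm ℓ) = ℓ :=
        LinearIsometryEquiv.apply_symm_apply _ _
      set v := (InnerProductSpace.toDual ℂ (H j)).symm ℓ with hv
      rw [← hvℓ]
      have h1 : φ v = (starRingEnd ℂ) (ψ j (InnerProductSpace.toDual ℂ (H j) v)) := rfl
      have h2 : ψ j (InnerProductSpace.toDual ℂ (H j) v) = (starRingEnd ℂ) (φ v) := by
        rw [h1, Complex.conj_conj]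
      rw [h2]
      have h3 : (inner ℂ ((InnerProductSpace.toDual ℂ (H j)).symm φ) v : ℂ) = φ v :=
        InnerProductSpace.toDual_symm_apply
      rw [← h3, inner_conj_symm]
      exact (InnerProductSpace.toDual_apply_apply).symm
    choose gg hggspec using hggex
    have hcompat : ∀ j, r j (gg (j + 1)) = gg j := by
      intro j
      have key : ∀ ℓ : H j →L[ℂ] ℂ, ℓ (r j (gg (j + 1))) = ℓ (gg j) := by
        intro ℓ
        calc ℓ (r j (gg (j + 1))) = (ℓ.comp (rL j)) (gg (j + 1)) := rfl
          _ = ψ (j + 1) (ℓ.comp (rL j)) := (hggspec (j + 1) _).symm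
          _ = Φ ((ℓ.comp (rL j)).comp (RL (j + 1))) := hψ _ _
          _ = Φ (ℓ.comp (RL j)) := by
              congr 1
              ext f
              simp only [ContinuousLinearMap.comp_apply]
              exact congrArg ℓ (hrR j f)
          _ = ψ j ℓ := (hψ _ _).symm
          _ = ℓ (gg j) := hggspec j ℓ
      have h3 := key (innerSL ℂ (r j (gg (j + 1)) - gg j))
      simp only [innerSL_apply_apply] at h3
      have h2 : (inner ℂ (r j (gg (j + 1)) - gg j) (r j (gg (j + 1)) - gg j) : ℂ) = 0 := by
        rw [inner_sub_right, h3, sub_self]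
      exact sub_eq_zero.mp (inner_self_eq_zero.mp h2)
    obtain ⟨f₀, hf₀⟩ := glue gg hcompat
    refine ⟨f₀, ?_⟩
    ext Λ
    obtain ⟨j, ℓ, hΛrep⟩ := hrep Λ
    have hΛeq : Λ = ℓ.comp (RL j) := ContinuousLinearMap.ext fun f => hΛrep f
    calc Jlin f₀ Λ = Λ f₀ := rfl
      _ = ℓ (R j f₀) := hΛrep f₀
      _ = ℓ (gg j) := by rw [hf₀]
      _ = ψ j ℓ := (hggspec j ℓ).symm
      _ = Φ (ℓ.comp (RL j)) := hψ j ℓ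
      _ = Φ Λ := by rw [← hΛeq]
  let e : E ≃ₗ[ℂ] ((E →L[ℂ] ℂ) →L[ℂ] ℂ) := LinearEquiv.ofBijective Jlin ⟨hinj, hsurj⟩
  -- continuity of the inverse
  have hesymm_cont : Continuous e.symm := by
    refine continuous_of_continuousAt_zero e.symm.toLinearMap.toAddMonoidHom ?_
    show Tendsto (⇑e.symm) (𝓝 0) (𝓝 (e.symm 0))
    rw [map_zero e.symm]
    intro U hU
    obtain ⟨⟨s, δ⟩, hδ, hballU⟩ := hp.hasBasis_zero_ball.mem_iff.mp hU
    set j := s.sup id with hj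
    set B'j : Set (E →L[ℂ] ℂ) :=
      (fun ℓ : H j →L[ℂ] ℂ => ℓ.comp (RL j)) '' closedBall 0 1 with hB'j
    have hB'jbdd : IsVonNBounded ℂ B'j := by
      rw [ContinuousLinearMap.hasBasis_nhds_zero.isVonNBounded_iff]
      rintro ⟨B₀, V⟩ ⟨hB₀, hV⟩
      obtain ⟨εV, hεV, hballV⟩ := Metric.mem_nhds_iff.mp hV
      obtain ⟨M₀, hM₀pos, hM₀⟩ : ∃ M₀ : ℝ, 0 < M₀ ∧ ∀ f ∈ B₀, p j f ≤ M₀ := by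
        obtain ⟨rr, hrrpos, hrr⟩ := hp.isVonNBounded_iff_seminorm_bounded.mp hB₀ j
        exact ⟨max rr 1, lt_of_lt_of_le one_pos (le_max_right rr 1),
          fun f hf => le_trans (hrr f hf).le (le_max_left rr 1)⟩
      rw [absorbs_iff_norm]
      refine ⟨2 * M₀ / εV, fun c hc => ?_⟩
      have hcpos : 0 < ‖c‖ := lt_of_lt_of_le (by positivity) hc
      have hc0 : c ≠ 0 := norm_pos_iff.mp hcpos
      rintro _ ⟨ℓ, hℓ, rfl⟩
      rw [Set.mem_smul_set_iff_inv_smul_mem₀ hc0]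
      intro x hx
      apply hballV
      rw [mem_ball_zero_iff]
      have e1 : ((c⁻¹ • (ℓ.comp (RL j))) x) = c⁻¹ * ℓ (R j x) := rfl
      rw [e1, norm_mul, norm_inv]
      have hℓ1 : ‖ℓ‖ ≤ 1 := mem_closedBall_zero_iff.mp hℓ
      have h5 : ‖ℓ (R j x)‖ ≤ M₀ := by
        calc ‖ℓ (R j x)‖ ≤ ‖ℓ‖ * ‖R j x‖ := ℓ.le_opNorm _
          _ ≤ 1 * M₀ := by
              refine mul_le_mul hℓ1 ?_ (norm_nonneg _) one_pos.le
              rw [hR]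
              exact hM₀ x hx
          _ = M₀ := one_mul _
      have hcinv : ‖c‖⁻¹ ≤ εV / (2 * M₀) := by
        have h9 : (εV / (2 * M₀))⁻¹ ≤ ‖c‖ := by rw [inv_div]; exact hc
        exact inv_le_of_inv_le₀ (by positivity) h9
      calc ‖c‖⁻¹ * ‖ℓ (R j x)‖ ≤ ‖c‖⁻¹ * M₀ :=
            mul_le_mul_of_nonneg_left h5 (by positivity)
        _ ≤ (εV / (2 * M₀)) * M₀ := mul_le_mul_of_nonneg_right hcinv hM₀pos.le
        _ = εV / 2 := by field_simp
        _ < εV := by linarith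
    have hN : {Φ' : (E →L[ℂ] ℂ) →L[ℂ] ℂ | ∀ Λ ∈ B'j, Φ' Λ ∈ closedBall (0 : ℂ) (δ / 2)}
        ∈ 𝓝 (0 : (E →L[ℂ] ℂ) →L[ℂ] ℂ) :=
      ContinuousLinearMap.hasBasis_nhds_zero.mem_of_mem
        (i := (B'j, closedBall 0 (δ / 2))) ⟨hB'jbdd, closedBall_mem_nhds 0 (by positivity)⟩
    refine mem_map.mpr (mem_of_superset hN ?_)
    intro Φ' hΦ'
    apply hballU
    rw [Seminorm.mem_ball_zero]
    set f := e.symm Φ' with hf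
    have hfΛ : ∀ Λ : E →L[ℂ] ℂ, Λ f = Φ' Λ := by
      intro Λ
      have he : e f = Φ' := by rw [hf]; exact e.apply_symm_apply Φ'
      calc Λ f = (e f) Λ := rfl
        _ = Φ' Λ := by rw [he]
    have hpj : p j f ≤ δ / 2 := by
      rcases eq_or_ne (R j f) 0 with h | h
      · rw [← hR j f, h, norm_zero]; positivity
      · set x := R j f with hx
        set ℓ : H j →L[ℂ] ℂ := ((‖x‖⁻¹ : ℝ) : ℂ) • innerSL ℂ x with hℓ
        have hxpos : 0 < ‖x‖ := norm_pos_iff.mpr h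
        have hℓnorm : ‖ℓ‖ ≤ 1 := by
          refine ContinuousLinearMap.opNorm_le_bound _ zero_le_one fun v => ?_
          rw [one_mul, hℓ, ContinuousLinearMap.smul_apply, innerSL_apply_apply, smul_eq_mul,
            norm_mul, Complex.norm_real, Real.norm_eq_abs,
            abs_of_nonneg (inv_nonneg.mpr hxpos.le)]
          calc ‖x‖⁻¹ * ‖(inner ℂ x v : ℂ)‖ ≤ ‖x‖⁻¹ * (‖x‖ * ‖v‖) :=
                mul_le_mul_of_nonneg_left (norm_inner_le_norm x v) (by positivity)
            _ = ‖v‖ := by rw [← mul_assoc, inv_mul_cancel₀ hxpos.ne', one_mul]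
        have hmem : ℓ.comp (RL j) ∈ B'j := ⟨ℓ, mem_closedBall_zero_iff.mpr hℓnorm, rfl⟩
        have h6 := hΦ' _ hmem
        rw [mem_closedBall_zero_iff] at h6
        have h7 : Φ' (ℓ.comp (RL j)) = ℓ x := by rw [← hfΛ]; rfl
        rw [h7] at h6
        have h8 : ‖ℓ x‖ = ‖x‖ := by
          have e2 : ℓ x = ((‖x‖⁻¹ : ℝ) : ℂ) * (inner ℂ x x : ℂ) := by
            rw [hℓ, ContinuousLinearMap.smul_apply, innerSL_apply_apply, smul_eq_mul]
          have e3 : ℓ x = ((‖x‖ : ℝ) : ℂ) := by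
            rw [e2, inner_self_eq_norm_sq_to_K]
            have e4 : ((‖x‖⁻¹ : ℝ) : ℂ) * ((‖x‖ : ℝ) : ℂ) ^ 2 = ((‖x‖ : ℝ) : ℂ) := by
              rw [← Complex.ofReal_pow, ← Complex.ofReal_mul, sq, ← mul_assoc,
                inv_mul_cancel₀ hxpos.ne', one_mul]
            exact e4
          rw [e3, Complex.norm_real, Real.norm_eq_abs, abs_of_nonneg (norm_nonneg x)]
        rw [← hR, ← hx, ← h8]
        exact h6
    have hsup : (s.sup p) f ≤ p j f :=
      Seminorm.finset_sup_apply_le (apply_nonneg _ _)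
        (fun i hi => hmono (Finset.le_sup (f := id) hi) f)
    calc (s.sup p) f ≤ p j f := hsup
      _ ≤ δ / 2 := hpj
      _ < δ := by linarith
  refine ⟨{ e with continuous_toFun := hJcont, continuous_invFun := hesymm_cont },
    fun f Λ => rfl⟩

end AbstractReflexive
end AbstractPart


noncomputable section ConcretePieces

open MeasureTheory Filter Topology

variable {d : ℕ} {Ω : Set (Fin d → ℝ)} {K : ℕ → Set (Fin d → ℝ)}

section ConcreteMaps

/-- local measure -/
abbrev locμ (Ω : Set (Fin d → ℝ)) : Measure (Fin d → ℝ) := volume.restrict Ω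

lemma memℒp_of_L2loc_s4 (hKc : ∀ j, IsCompact (K j)) (hKΩ : ∀ j, K j ⊆ Ω)
    (f : L2loc d Ω) (j : ℕ) :
    MemLp (⇑(f : (Fin d → ℝ) →ₘ[locμ Ω] ℂ)) 2 ((locμ Ω).restrict (K j)) :=
  ⟨(f : (Fin d → ℝ) →ₘ[locμ Ω] ℂ).aestronglyMeasurable.restrict,
    f.2 (K j) (hKc j) (hKΩ j)⟩

/-- restriction to `K j` as a linear map into `L²(K j)` -/
def Rmap (hKc : ∀ j, IsCompact (K j)) (hKΩ : ∀ j, K j ⊆ Ω) (j : ℕ) :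
    L2loc d Ω →ₗ[ℂ] Lp ℂ 2 ((locμ Ω).restrict (K j)) where
  toFun f := (memℒp_of_L2loc_s4 hKc hKΩ f j).toLp _
  map_add' f g := by
    have h1 : ⇑((f + g : L2loc d Ω) : (Fin d → ℝ) →ₘ[locμ Ω] ℂ)
        =ᵐ[(locμ Ω).restrict (K j)]
          ⇑(f : (Fin d → ℝ) →ₘ[locμ Ω] ℂ) + ⇑(g : (Fin d → ℝ) →ₘ[locμ Ω] ℂ) := by
      simpa using (AEEqFun.coeFn_add (f : (Fin d → ℝ) →ₘ[locμ Ω] ℂ) g).restrict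
    exact (MemLp.toLp_congr _ ((memℒp_of_L2loc_s4 hKc hKΩ f j).add
      (memℒp_of_L2loc_s4 hKc hKΩ g j)) h1).trans (MemLp.toLp_add _ _)
  map_smul' c f := by
    have h1 : ⇑((c • f : L2loc d Ω) : (Fin d → ℝ) →ₘ[locμ Ω] ℂ)
        =ᵐ[(locμ Ω).restrict (K j)] c • ⇑(f : (Fin d → ℝ) →ₘ[locμ Ω] ℂ) := by
      simpa using (AEEqFun.coeFn_smul c (f : (Fin d → ℝ) →ₘ[locμ Ω] ℂ)).restrict
    exact (MemLp.toLp_congr (memℒp_of_L2loc_s4 hKc hKΩ (c • f) j)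
      ((memℒp_of_L2loc_s4 hKc hKΩ f j).const_smul c) h1).trans
      (MemLp.toLp_const_smul c (memℒp_of_L2loc_s4 hKc hKΩ f j))

lemma indicator_congr_ae {μ : Measure (Fin d → ℝ)} {s : Set (Fin d → ℝ)}
    (hs : MeasurableSet s) {f₁ f₂ : (Fin d → ℝ) → ℂ} (h : f₁ =ᵐ[μ.restrict s] f₂) :
    s.indicator f₁ =ᵐ[μ] s.indicator f₂ := by
  have h2 : ∀ᵐ x ∂μ, x ∈ s → f₁ x = f₂ x := (ae_restrict_iff'₀ hs.nullMeasurableSet).mp h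
  filter_upwards [h2] with x hx
  by_cases hxs : x ∈ s
  · simp [Set.indicator_of_mem hxs, hx hxs]
  · simp [Set.indicator_of_notMem hxs]

lemma secmem (hKc : ∀ j, IsCompact (K j)) (j : ℕ) (g : Lp ℂ 2 ((locμ Ω).restrict (K j))) :
    AEEqFun.mk ((K j).indicator ⇑g)
      (((Lp.stronglyMeasurable g).indicator
        (hKc j).isClosed.measurableSet).aestronglyMeasurable) ∈ L2loc d Ω := by
  intro K' hK' hK'Ω
  have h1 : ⇑(AEEqFun.mk ((K j).indicator ⇑g)
      (((Lp.stronglyMeasurable g).indicator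
        (hKc j).isClosed.measurableSet).aestronglyMeasurable) : (Fin d → ℝ) →ₘ[locμ Ω] ℂ)
      =ᵐ[(locμ Ω).restrict K'] (K j).indicator ⇑g :=
    (AEEqFun.coeFn_mk _ _).restrict
  rw [eLpNorm_congr_ae h1]
  calc eLpNorm ((K j).indicator ⇑g) 2 ((locμ Ω).restrict K')
      ≤ eLpNorm ((K j).indicator ⇑g) 2 (locμ Ω) :=
        eLpNorm_mono_measure _ Measure.restrict_le_self
    _ = eLpNorm (⇑g) 2 ((locμ Ω).restrict (K j)) :=
          eLpNorm_indicator_eq_eLpNorm_restrict (hKc j).isClosed.measurableSet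
    _ < ⊤ := Lp.eLpNorm_lt_top g

/-- extension by zero as a linear map -/
def secmap (hKc : ∀ j, IsCompact (K j)) (j : ℕ) :
    Lp ℂ 2 ((locμ Ω).restrict (K j)) →ₗ[ℂ] L2loc d Ω where
  toFun g := ⟨AEEqFun.mk ((K j).indicator ⇑g)
      (((Lp.stronglyMeasurable g).indicator
        (hKc j).isClosed.measurableSet).aestronglyMeasurable), secmem hKc j g⟩
  map_add' g h := by
    apply Subtype.ext
    show AEEqFun.mk _ _ = AEEqFun.mk _ _ + AEEqFun.mk _ _
    rw [AEEqFun.mk_add_mk]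
    apply AEEqFun.ext
    refine ((AEEqFun.coeFn_mk _ _).trans ?_).trans (AEEqFun.coeFn_mk _ _).symm
    have h1 : ⇑(g + h) =ᵐ[(locμ Ω).restrict (K j)] ⇑g + ⇑h := Lp.coeFn_add g h
    refine (indicator_congr_ae (hKc j).isClosed.measurableSet h1).trans ?_
    filter_upwards with x
    by_cases hxs : x ∈ K j
    · simp [Set.indicator_of_mem hxs]
    · simp [Set.indicator_of_notMem hxs]
  map_smul' c g := by
    apply Subtype.ext
    show AEEqFun.mk _ _ = c • AEEqFun.mk _ _
    rw [AEEqFun.smul_mk]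
    apply AEEqFun.ext
    refine ((AEEqFun.coeFn_mk _ _).trans ?_).trans (AEEqFun.coeFn_mk _ _).symm
    have h1 : ⇑(c • g) =ᵐ[(locμ Ω).restrict (K j)] c • ⇑g := Lp.coeFn_smul c g
    refine (indicator_congr_ae (hKc j).isClosed.measurableSet h1).trans ?_
    filter_upwards with x
    by_cases hxs : x ∈ K j
    · simp [Set.indicator_of_mem hxs]
    · simp [Set.indicator_of_notMem hxs]

lemma rmemℒp (hKmono : ∀ ⦃i j : ℕ⦄, i ≤ j → K i ⊆ K j) {i j : ℕ} (hij : i ≤ j)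
    (g : Lp ℂ 2 ((locμ Ω).restrict (K j))) : MemLp (⇑g) 2 ((locμ Ω).restrict (K i)) :=
  ⟨(Lp.aestronglyMeasurable g).mono_measure (Measure.restrict_mono (hKmono hij) le_rfl),
    (eLpNorm_mono_measure _ (Measure.restrict_mono (hKmono hij) le_rfl)).trans_lt
      (Lp.eLpNorm_lt_top g)⟩

/-- restriction between the Hilbert spaces -/
def rmap (hKmono : ∀ ⦃i j : ℕ⦄, i ≤ j → K i ⊆ K j) (j : ℕ) :
    Lp ℂ 2 ((locμ Ω).restrict (K (j + 1))) →ₗ[ℂ] Lp ℂ 2 ((locμ Ω).restrict (K j)) where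
  toFun g := (rmemℒp hKmono (Nat.le_succ j) g).toLp _
  map_add' g h := by
    have h1 : ⇑(g + h) =ᵐ[(locμ Ω).restrict (K j)] ⇑g + ⇑h :=
      (Lp.coeFn_add g h).filter_mono
        (ae_mono (Measure.restrict_mono (hKmono (Nat.le_succ j)) le_rfl))
    exact (MemLp.toLp_congr (rmemℒp hKmono (Nat.le_succ j) (g + h))
      ((rmemℒp hKmono (Nat.le_succ j) g).add (rmemℒp hKmono (Nat.le_succ j) h)) h1).trans
      (MemLp.toLp_add _ _)
  map_smul' c g := by
    have h1 : ⇑(c • g) =ᵐ[(locμ Ω).restrict (K j)] c • ⇑g :=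
      (Lp.coeFn_smul c g).filter_mono
        (ae_mono (Measure.restrict_mono (hKmono (Nat.le_succ j)) le_rfl))
    exact (MemLp.toLp_congr (rmemℒp hKmono (Nat.le_succ j) (c • g))
      ((rmemℒp hKmono (Nat.le_succ j) g).const_smul c) h1).trans
      (MemLp.toLp_const_smul c (rmemℒp hKmono (Nat.le_succ j) g))


lemma Rmap_apply (hKc : ∀ j, IsCompact (K j)) (hKΩ : ∀ j, K j ⊆ Ω) (j : ℕ)
    (f : L2loc d Ω) :
    Rmap hKc hKΩ j f = (memℒp_of_L2loc_s4 hKc hKΩ f j).toLp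
      (⇑(f : (Fin d → ℝ) →ₘ[locμ Ω] ℂ)) := rfl

lemma rmap_apply (hKmono : ∀ ⦃i j : ℕ⦄, i ≤ j → K i ⊆ K j) (j : ℕ)
    (g : Lp ℂ 2 ((locμ Ω).restrict (K (j + 1)))) :
    rmap hKmono j g = (rmemℒp hKmono (Nat.le_succ j) g).toLp ⇑g := rfl

lemma secmap_coe (hKc : ∀ j, IsCompact (K j)) (j : ℕ)
    (g : Lp ℂ 2 ((locμ Ω).restrict (K j))) :
    ((secmap hKc j g : L2loc d Ω) : (Fin d → ℝ) →ₘ[locμ Ω] ℂ)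
      = AEEqFun.mk ((K j).indicator ⇑g)
        (((Lp.stronglyMeasurable g).indicator
          (hKc j).isClosed.measurableSet).aestronglyMeasurable) := rfl

lemma Rmap_norm (hKc : ∀ j, IsCompact (K j)) (hKΩ : ∀ j, K j ⊆ Ω) (j : ℕ) (f : L2loc d Ω) :
    ‖Rmap hKc hKΩ j f‖
      = (eLpNorm (⇑(f : (Fin d → ℝ) →ₘ[locμ Ω] ℂ)) 2 ((locμ Ω).restrict (K j))).toReal := by
  rw [Rmap_apply]
  exact Lp.norm_toLp _ _

lemma Rmap_secmap (hKc : ∀ j, IsCompact (K j)) (hKΩ : ∀ j, K j ⊆ Ω) (j : ℕ)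
    (g : Lp ℂ 2 ((locμ Ω).restrict (K j))) :
    Rmap hKc hKΩ j (secmap hKc j g) = g := by
  have h1 : ⇑((secmap hKc j g : L2loc d Ω) : (Fin d → ℝ) →ₘ[locμ Ω] ℂ)
      =ᵐ[(locμ Ω).restrict (K j)] ⇑g := by
    rw [secmap_coe]
    refine ((AEEqFun.coeFn_mk _ _).restrict).trans ?_
    exact indicator_ae_eq_restrict (hKc j).isClosed.measurableSet
  rw [Rmap_apply]
  exact (MemLp.toLp_congr (memℒp_of_L2loc_s4 hKc hKΩ (secmap hKc j g) j) (Lp.memLp g) h1).trans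
    (Lp.toLp_coeFn g (Lp.memLp g))

lemma rmap_Rmap (hKc : ∀ j, IsCompact (K j)) (hKΩ : ∀ j, K j ⊆ Ω)
    (hKmono : ∀ ⦃i j : ℕ⦄, i ≤ j → K i ⊆ K j) (j : ℕ) (f : L2loc d Ω) :
    rmap hKmono j (Rmap hKc hKΩ (j + 1) f) = Rmap hKc hKΩ j f := by
  have h1 : ⇑(Rmap hKc hKΩ (j + 1) f) =ᵐ[(locμ Ω).restrict (K j)]
      ⇑(f : (Fin d → ℝ) →ₘ[locμ Ω] ℂ) := by
    have h2 : ⇑(Rmap hKc hKΩ (j + 1) f) =ᵐ[(locμ Ω).restrict (K (j + 1))]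
        ⇑(f : (Fin d → ℝ) →ₘ[locμ Ω] ℂ) := by
      rw [Rmap_apply]
      exact MemLp.coeFn_toLp _
    exact h2.filter_mono (ae_mono (Measure.restrict_mono (hKmono (Nat.le_succ j)) le_rfl))
  rw [rmap_apply, Rmap_apply]
  exact MemLp.toLp_congr (rmemℒp hKmono (Nat.le_succ j) (Rmap hKc hKΩ (j + 1) f))
    (memℒp_of_L2loc_s4 hKc hKΩ f j) h1

lemma pmono (hKc : ∀ j, IsCompact (K j)) (hKΩ : ∀ j, K j ⊆ Ω)
    (hKmono : ∀ ⦃i j : ℕ⦄, i ≤ j → K i ⊆ K j) {i j : ℕ} (hij : i ≤ j) (f : L2loc d Ω) :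
    (eLpNorm (⇑(f : (Fin d → ℝ) →ₘ[locμ Ω] ℂ)) 2 ((locμ Ω).restrict (K i))).toReal
      ≤ (eLpNorm (⇑(f : (Fin d → ℝ) →ₘ[locμ Ω] ℂ)) 2 ((locμ Ω).restrict (K j))).toReal :=
  ENNReal.toReal_mono (f.2 (K j) (hKc j) (hKΩ j)).ne
    (eLpNorm_mono_measure _ (Measure.restrict_mono (hKmono hij) le_rfl))

lemma sep_L2loc (hΩ : IsOpen Ω) (hKc : ∀ j, IsCompact (K j)) (hKΩ : ∀ j, K j ⊆ Ω)
    (hKunion : (⋃ j, K j) = Ω) (f : L2loc d Ω)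
    (h0 : ∀ j, (eLpNorm (⇑(f : (Fin d → ℝ) →ₘ[locμ Ω] ℂ)) 2
      ((locμ Ω).restrict (K j))).toReal = 0) : f = 0 := by
  have h1 : ∀ j, (⇑(f : (Fin d → ℝ) →ₘ[locμ Ω] ℂ)) =ᵐ[(locμ Ω).restrict (K j)] 0 := by
    intro j
    have h2 : eLpNorm (⇑(f : (Fin d → ℝ) →ₘ[locμ Ω] ℂ)) 2 ((locμ Ω).restrict (K j)) = 0 := by
      rcases (ENNReal.toReal_eq_zero_iff _).mp (h0 j) with h | h
      · exact h
      · exact absurd h (f.2 (K j) (hKc j) (hKΩ j)).ne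
    exact (eLpNorm_eq_zero_iff
      ((f : (Fin d → ℝ) →ₘ[locμ Ω] ℂ).aestronglyMeasurable.restrict) (by norm_num)).mp h2
  have hN : ∀ j, (locμ Ω) ({x | ⇑(f : (Fin d → ℝ) →ₘ[locμ Ω] ℂ) x ≠ 0} ∩ K j) = 0 := by
    intro j
    rw [← Measure.restrict_apply' (hKc j).isClosed.measurableSet]
    exact ae_iff.mp (h1 j)
  have hΩc : (locμ Ω) Ωᶜ = 0 := by
    rw [Measure.restrict_apply hΩ.measurableSet.compl, Set.compl_inter_self]
    exact measure_empty
  have hsub : {x | ⇑(f : (Fin d → ℝ) →ₘ[locμ Ω] ℂ) x ≠ 0}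
      ⊆ Ωᶜ ∪ ⋃ j, ({x | ⇑(f : (Fin d → ℝ) →ₘ[locμ Ω] ℂ) x ≠ 0} ∩ K j) := by
    intro x hx
    by_cases hxΩ : x ∈ Ω
    · refine Or.inr ?_
      rw [← hKunion] at hxΩ
      obtain ⟨j, hj⟩ := Set.mem_iUnion.mp hxΩ
      exact Set.mem_iUnion.mpr ⟨j, hx, hj⟩
    · exact Or.inl hxΩ
  have hzero : (locμ Ω) {x | ⇑(f : (Fin d → ℝ) →ₘ[locμ Ω] ℂ) x ≠ 0} = 0 :=
    measure_mono_null hsub (measure_union_null hΩc (measure_iUnion_null hN))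
  apply Subtype.ext
  show (f : (Fin d → ℝ) →ₘ[locμ Ω] ℂ) = 0
  apply AEEqFun.ext
  refine EventuallyEq.trans ?_ (AEEqFun.coeFn_zero).symm
  exact ae_iff.mpr hzero

lemma glue_exists (hΩ : IsOpen Ω) (hKc : ∀ j, IsCompact (K j)) (hKΩ : ∀ j, K j ⊆ Ω)
    (hKint : ∀ j, K j ⊆ interior (K (j + 1))) (hKunion : (⋃ j, K j) = Ω)
    (hKmono : ∀ ⦃i j : ℕ⦄, i ≤ j → K i ⊆ K j)
    (g : ∀ j, Lp ℂ 2 ((locμ Ω).restrict (K j)))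
    (hcomp : ∀ j, rmap hKmono j (g (j + 1)) = g j) :
    ∃ f : L2loc d Ω, ∀ j, Rmap hKc hKΩ j f = g j := by
  classical
  have hae : ∀ j, ⇑(g (j + 1)) =ᵐ[(locμ Ω).restrict (K j)] ⇑(g j) := by
    intro j
    have h1 : ⇑(rmap hKmono j (g (j + 1))) =ᵐ[(locμ Ω).restrict (K j)] ⇑(g (j + 1)) := by
      rw [rmap_apply]
      exact MemLp.coeFn_toLp _
    rw [hcomp j] at h1
    exact h1.symm
  set N : Set (Fin d → ℝ) := ⋃ j, ({x | ⇑(g (j + 1)) x ≠ ⇑(g j) x} ∩ K j) with hNdef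
  have hN : (locμ Ω) N = 0 := by
    refine measure_iUnion_null fun j => ?_
    rw [← Measure.restrict_apply' (hKc j).isClosed.measurableSet]
    exact ae_iff.mp (hae j)
  have hchain : ∀ x ∉ N, ∀ i m : ℕ, i ≤ m → x ∈ K i → ⇑(g m) x = ⇑(g i) x := by
    intro x hxN i m him hxi
    induction m, him using Nat.le_induction with
    | base => rfl
    | succ m him ih =>
      have hxm : x ∈ K m := hKmono him hxi
      have h1 : ⇑(g (m + 1)) x = ⇑(g m) x := by
        by_contra hne
        exact hxN (Set.mem_iUnion.mpr ⟨m, hne, hxm⟩)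
      rw [h1, ih]
  set F : (Fin d → ℝ) → ℂ :=
    fun x => if h : ∃ n, x ∈ K n then ⇑(g (Nat.find h)) x else 0 with hFdef
  have hFval : ∀ x ∉ N, ∀ m, x ∈ K m → F x = ⇑(g m) x := by
    intro x hxN m hxm
    have hex : ∃ n, x ∈ K n := ⟨m, hxm⟩
    rw [hFdef]
    simp only [dif_pos hex]
    exact (hchain x hxN (Nat.find hex) m (Nat.find_min' hex hxm) (Nat.find_spec hex)).symm
  have hFtend : ∀ x ∉ N,
      Tendsto (fun n => (K n).indicator ⇑(g n) x) atTop (𝓝 (F x)) := by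
    intro x hxN
    by_cases hex : ∃ n, x ∈ K n
    · refine tendsto_atTop_of_eventually_const (i₀ := Nat.find hex) fun n hn => ?_
      have hxn : x ∈ K n := hKmono hn (Nat.find_spec hex)
      rw [Set.indicator_of_mem hxn]
      rw [hFval x hxN n hxn]
    · refine tendsto_atTop_of_eventually_const (i₀ := 0) fun n _ => ?_
      have hxn : x ∉ K n := fun h => hex ⟨n, h⟩
      rw [Set.indicator_of_notMem hxn, hFdef]
      simp only [dif_neg hex]
  have hFaesm : AEStronglyMeasurable F (locμ Ω) := by
    refine aestronglyMeasurable_of_tendsto_ae atTop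
      (fun n => ((Lp.stronglyMeasurable (g n)).indicator
        (hKc n).isClosed.measurableSet).aestronglyMeasurable) ?_
    filter_upwards [measure_eq_zero_iff_ae_notMem.mp hN] with x hx
    exact hFtend x hx
  have hFK : ∀ m, F =ᵐ[(locμ Ω).restrict (K m)] ⇑(g m) := by
    intro m
    rw [EventuallyEq, ae_restrict_iff'₀ (hKc m).isClosed.measurableSet.nullMeasurableSet]
    filter_upwards [measure_eq_zero_iff_ae_notMem.mp hN] with x hx hxm
    exact hFval x hx m hxm
  have hFmem : AEEqFun.mk F hFaesm ∈ L2loc d Ω := by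
    intro K' hK' hK'Ω
    obtain ⟨m, hm⟩ : ∃ m, K' ⊆ K m := by
      have hcover : K' ⊆ ⋃ j, interior (K (j + 1)) := by
        intro x hx
        have hxΩ : x ∈ Ω := hK'Ω hx
        rw [← hKunion] at hxΩ
        obtain ⟨j, hj⟩ := Set.mem_iUnion.mp hxΩ
        exact Set.mem_iUnion.mpr ⟨j, hKint j hj⟩
      obtain ⟨t, ht⟩ := hK'.elim_finite_subcover (fun j => interior (K (j + 1)))
        (fun j => isOpen_interior) hcover
      refine ⟨t.sup id + 1, fun x hx => ?_⟩
      obtain ⟨j, hjt, hj⟩ := Set.mem_iUnion₂.mp (ht hx)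
      exact hKmono (Nat.succ_le_succ (Finset.le_sup (f := id) hjt)) (interior_subset hj)
    have h1 : ⇑(AEEqFun.mk F hFaesm) =ᵐ[(locμ Ω).restrict K'] F :=
      (AEEqFun.coeFn_mk _ _).restrict
    rw [eLpNorm_congr_ae h1]
    calc eLpNorm F 2 ((locμ Ω).restrict K')
        ≤ eLpNorm F 2 ((locμ Ω).restrict (K m)) :=
          eLpNorm_mono_measure _ (Measure.restrict_mono hm le_rfl)
      _ = eLpNorm (⇑(g m)) 2 ((locμ Ω).restrict (K m)) := eLpNorm_congr_ae (hFK m)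
      _ < ⊤ := Lp.eLpNorm_lt_top (g m)
  refine ⟨⟨AEEqFun.mk F hFaesm, hFmem⟩, fun j => ?_⟩
  have h1 : ⇑(((⟨AEEqFun.mk F hFaesm, hFmem⟩ : L2loc d Ω)) : (Fin d → ℝ) →ₘ[locμ Ω] ℂ)
      =ᵐ[(locμ Ω).restrict (K j)] ⇑(g j) :=
    ((AEEqFun.coeFn_mk _ _).restrict).trans (hFK j)
  rw [Rmap_apply]
  exact (MemLp.toLp_congr
    (memℒp_of_L2loc_s4 hKc hKΩ ⟨AEEqFun.mk F hFaesm, hFmem⟩ j) (Lp.memLp (g j)) h1).trans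
    (Lp.toLp_coeFn (g j) (Lp.memLp (g j)))

end ConcreteMaps



end ConcretePieces

set_option synthInstance.maxHeartbeats 1000000
set_option maxSynthPendingDepth 3

/-- **`L²_loc(Ω)` is reflexive** (the paper's Lemma 2.10, scalar case): for a nonempty open
`Ω ⊆ ℝ^d`, the Fréchet space `E = L²_loc(Ω)` with the topology of `L²`-convergence on
compact subsets is reflexive: the canonical evaluation map `J : E → E''`, `J(f)(Λ) = Λ(f)`,
into the strong bidual (each dual carrying the topology of uniform convergence on von
Neumann bounded sets, which is the default topology on `→L` in Mathlib) is a linear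
bijection and a homeomorphism onto the strong bidual. -/
theorem L2loc_reflexive (d : ℕ) (Ω : Set (Fin d → ℝ)) (hΩ : IsOpen Ω) (hne : Ω.Nonempty)
    (K : ℕ → Set (Fin d → ℝ)) (hKc : ∀ j, IsCompact (K j)) (hKΩ : ∀ j, K j ⊆ Ω)
    (hKint : ∀ j, K j ⊆ interior (K (j + 1))) (hKunion : (⋃ j, K j) = Ω) :
    letI : TopologicalSpace (L2loc d Ω) := L2locTopology d Ω K hKc hKΩ
    ∃ J : L2loc d Ω ≃L[ℂ] ((L2loc d Ω →L[ℂ] ℂ) →L[ℂ] ℂ),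
      ∀ (f : L2loc d Ω) (Λ : L2loc d Ω →L[ℂ] ℂ), J f Λ = Λ f := by
  letI : TopologicalSpace (L2loc d Ω) := L2locTopology d Ω K hKc hKΩ
  show ∃ J : L2loc d Ω ≃L[ℂ] ((L2loc d Ω →L[ℂ] ℂ) →L[ℂ] ℂ), ∀ f Λ, J f Λ = Λ f
  have hKmono : ∀ ⦃i j : ℕ⦄, i ≤ j → K i ⊆ K j := by
    intro i j hij
    induction j, hij using Nat.le_induction with
    | base => exact subset_rfl
    | succ m him ih => exact ih.trans ((hKint m).trans interior_subset)
  have hws : WithSeminorms (L2locSeminormFamily d Ω K hKc hKΩ) := ⟨rfl⟩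
  exact abstract_reflexive hws
    (fun i j hij f => pmono hKc hKΩ hKmono hij f)
    (Rmap hKc hKΩ) (fun j f => Rmap_norm hKc hKΩ j f)
    (secmap hKc) (Rmap_secmap hKc hKΩ)
    (rmap hKmono) (rmap_Rmap hKc hKΩ hKmono)
    (glue_exists hΩ hKc hKΩ hKint hKunion hKmono)
    (fun f hf => sep_L2loc hΩ hKc hKΩ hKunion f hf)
end
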